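/- arXiv:2512.10177 — 6 statements merged into one kernel-verified Lean document; each statement's English description precedes it below -/
import Mathlib

section
/- Let G be a finite triangle-free simple graph of order n and let k ∈ ℕ with k ≤ n. Then the matching reconfiguration graph M_k(G) is isomorphic to the Bell coloring graph B_{n−k}(Ḡ), where Ḡ is the complement of G. -/
open SimpleGraph

variable {V : Type*} [Fintype V] [DecidableEq V]

/-- Delete the vertex `v` from its part: `P − v`. -/
def eraseVtx (P : Multiset (Finset V)) (v : V) : Multiset (Finset V) :=
  P.map (fun s => s.erase v)

/-- A stable `k`-partition of `G`: a multiset of exactly `k` independent sets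
(empty parts allowed) that are pairwise disjoint and whose union is `V(G)`.
(Pairwise disjointness together with covering is encoded by requiring that the
multiset sum of the parts is exactly the multiset of all vertices.) -/
def IsStablePartition (G : SimpleGraph V) (k : ℕ) (P : Multiset (Finset V)) : Prop :=
  Multiset.card P = k ∧ (P.map Finset.val).sum = (Finset.univ : Finset V).val ∧
    ∀ s ∈ P, ∀ a ∈ s, ∀ b ∈ s, ¬ G.Adj a b

/-- The Bell `k`-coloring graph of `G`. -/
def bellGraph (G : SimpleGraph V) (k : ℕ) :
    SimpleGraph {P : Multiset (Finset V) // IsStablePartition G k P} where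
  Adj P Q := P ≠ Q ∧ ∃ v : V, eraseVtx P.1 v = eraseVtx Q.1 v
  symm := by
    constructor
    rintro P Q ⟨hne, v, hv⟩
    exact ⟨hne.symm, v, hv.symm⟩
  loopless := by
    constructor
    rintro P ⟨hne, _⟩
    exact hne rfl

/-- `M` is a matching of `G`: a set of edges of `G` that are pairwise
vertex-disjoint. -/
def IsMatchingSet (G : SimpleGraph V) (M : Finset (Sym2 V)) : Prop :=
  (↑M : Set (Sym2 V)) ⊆ G.edgeSet ∧
    ∀ e ∈ M, ∀ f ∈ M, e ≠ f → ∀ x : V, x ∈ e → x ∉ f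

/-- The edges of the spanning subgraph `G⟨M⟩` remaining after deleting the
vertex `v`; equality of these sets for two matchings says exactly
`G⟨M₁⟩ − v = G⟨M₂⟩ − v`. -/
def matchDel (M : Finset (Sym2 V)) (v : V) : Set (Sym2 V) :=
  {e : Sym2 V | e ∈ M ∧ v ∉ e}

/-- The matching reconfiguration graph `M_k(G)`: vertices are the matchings of
`G` of size at least `k`, with distinct matchings `M₁, M₂` adjacent iff
`G⟨M₁⟩ − v = G⟨M₂⟩ − v` for some vertex `v`. -/
def matchingGraph (G : SimpleGraph V) (k : ℕ) :
    SimpleGraph {M : Finset (Sym2 V) // IsMatchingSet G M ∧ k ≤ M.card} where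
  Adj M N := M ≠ N ∧ ∃ v : V, matchDel M.1 v = matchDel N.1 v
  symm := by
    constructor
    rintro M N ⟨hne, v, hv⟩
    exact ⟨hne.symm, v, hv.symm⟩
  loopless := by
    constructor
    rintro M ⟨hne, _⟩
    exact hne rfl

set_option linter.unusedSectionVars false

def sFin : Sym2 V → Finset V :=
  Sym2.lift ⟨fun a b => ({a, b} : Finset V), fun a b => Finset.pair_comm a b⟩

@[simp] lemma sFin_mk (a b : V) : sFin (s(a, b)) = {a, b} := rfl

@[simp] lemma mem_sFin {x : V} {e : Sym2 V} : x ∈ sFin e ↔ x ∈ e := by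
  induction e with | _ a b => simp [Sym2.mem_iff]

lemma sFin_injective : Function.Injective (sFin (V := V)) := by
  intro e f h
  induction e with | _ a b =>
  induction f with | _ c d =>
  simp only [sFin_mk] at h
  have ha : a ∈ ({c, d} : Finset V) := by rw [← h]; simp
  have hb : b ∈ ({c, d} : Finset V) := by rw [← h]; simp
  have hc : c ∈ ({a, b} : Finset V) := by rw [h]; simp
  have hd : d ∈ ({a, b} : Finset V) := by rw [h]; simp
  simp only [Finset.mem_insert, Finset.mem_singleton] at ha hb hc hd
  rw [Sym2.eq_iff]
  rcases ha with rfl | rfl <;> rcases hb with rfl | rfl <;>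
    rcases hc with hc | hc <;> rcases hd with hd | hd <;> tauto

lemma sFin_card {e : Sym2 V} (h : ¬ e.IsDiag) : (sFin e).card = 2 := by
  induction e with | _ a b =>
  rw [Sym2.mk_isDiag_iff] at h
  simp [Finset.card_insert_of_notMem, h]

/-- Unmatched vertices of `M`. -/
def unm (M : Finset (Sym2 V)) : Finset V :=
  Finset.univ.filter fun w => ∀ e ∈ M, w ∉ e

def toPart (M : Finset (Sym2 V)) (k : ℕ) : Multiset (Finset V) :=
  M.val.map sFin + (unm M).val.map (fun w => ({w} : Finset V))
  + Multiset.replicate (M.card - k) ∅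

def toMatch (P : Multiset (Finset V)) : Finset (Sym2 V) :=
  Finset.univ.filter fun e : Sym2 V => ¬ e.IsDiag ∧ sFin e ∈ P

section G
variable {G : SimpleGraph V} {M : Finset (Sym2 V)}

lemma not_diag_of_mem (hM : IsMatchingSet G M) {e : Sym2 V} (he : e ∈ M) : ¬ e.IsDiag :=
  G.not_isDiag_of_mem_edgeSet (hM.1 he)

lemma pairwise_disj (hM : IsMatchingSet G M) :
    (M : Set (Sym2 V)).Pairwise (Function.onFun Disjoint sFin) := by
  intro e he f hf hne
  simp only [Function.onFun, Finset.disjoint_left]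
  intro x hx hx'
  exact hM.2 e he f hf hne x (mem_sFin.mp hx) (mem_sFin.mp hx')

/-- The covering identity: matched + unmatched = all. -/
lemma cover (hM : IsMatchingSet G M) :
    (M.val.map fun e => (sFin e).val).sum + (unm M).val = Finset.univ.val := by
  have hB : (M.disjiUnion sFin (pairwise_disj hM)).val
      = (M.val.map fun e => (sFin e).val).sum := rfl
  set B := M.disjiUnion sFin (pairwise_disj hM) with hBdef
  have hunm : unm M = Finset.univ \ B := by
    ext w
    simp [unm, hBdef, Finset.mem_disjiUnion]
    exact ⟨fun h hw => by
        obtain ⟨e, he, hwe⟩ := Finset.mem_disjiUnion.mp hw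
        exact h e he (mem_sFin.mp hwe),
      fun h e he hwe => h (Finset.mem_disjiUnion.mpr ⟨e, he, mem_sFin.mpr hwe⟩)⟩
  rw [hunm, ← hB, Finset.sdiff_val]
  exact add_tsub_cancel_of_le (Finset.val_le_iff.mpr (Finset.subset_univ B))

lemma card_eqn (hM : IsMatchingSet G M) :
    2 * M.card + (unm M).card = Fintype.card V := by
  have h := congrArg Multiset.card (cover hM)
  rw [Multiset.card_add] at h
  have hj : Multiset.card (M.val.map fun e => (sFin e).val).sum
      = ((M.val.map fun e => (sFin e).val).map Multiset.card).sum :=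
    Multiset.card_join _
  have h2 : ((M.val.map fun e => (sFin e).val).map Multiset.card).sum = 2 * M.card := by
    rw [Multiset.map_map]
    have hc : ∀ e ∈ M.val, (Multiset.card ∘ fun e => (sFin e).val) e = 2 := fun e he => by
      show (sFin e).card = 2
      exact sFin_card (not_diag_of_mem hM he)
    rw [Multiset.map_congr rfl hc, Multiset.map_const', Multiset.sum_replicate,
      smul_eq_mul, mul_comm]
    rfl
  rw [hj, h2] at h
  rw [Fintype.card, Finset.card]
  exact h

variable {k : ℕ}

lemma toPart_card (hM : IsMatchingSet G M) (hk : k ≤ M.card) :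
    Multiset.card (toPart M k) = Fintype.card V - k := by
  have h := card_eqn hM
  have hu : Multiset.card (unm M).val = (unm M).card := rfl
  simp only [toPart, Multiset.card_add, Multiset.card_map, Multiset.card_replicate, hu]
  have hm : Multiset.card M.val = M.card := rfl
  omega

lemma toPart_sum (hM : IsMatchingSet G M) :
    ((toPart M k).map Finset.val).sum = Finset.univ.val := by
  simp only [toPart, Multiset.map_add, Multiset.sum_add, Multiset.map_map,
    Multiset.map_replicate]
  have h0 : (∅ : Finset V).val = 0 := rfl
  rw [h0, Multiset.sum_replicate, smul_zero, add_zero]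
  have h1 : ((unm M).val.map (Finset.val ∘ fun w => ({w} : Finset V))).sum = (unm M).val := by
    have : (Finset.val ∘ fun w : V => ({w} : Finset V)) = fun w => ({w} : Multiset V) := rfl
    rw [this, Multiset.sum_map_singleton]
  rw [h1]
  exact cover hM

lemma toPart_indep (hM : IsMatchingSet G M) :
    ∀ s ∈ toPart M k, ∀ a ∈ s, ∀ b ∈ s, ¬ Gᶜ.Adj a b := by
  intro s hs a ha b hb
  rw [compl_adj, not_and_or, not_not, not_not]
  simp only [toPart, Multiset.mem_add, Multiset.mem_map, Multiset.eq_of_mem_replicate] at hs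
  rcases hs with (⟨e, he, rfl⟩ | ⟨w, _, rfl⟩) | hrep
  · rw [mem_sFin] at ha hb
    have heM : e ∈ M := he
    induction e with | _ x y =>
    have hadj : G.Adj x y := (SimpleGraph.mem_edgeSet G).mp (hM.1 heM)
    rw [Sym2.mem_iff] at ha hb
    rcases ha with rfl | rfl <;> rcases hb with rfl | rfl
    · exact Or.inl rfl
    · exact Or.inr hadj
    · exact Or.inr hadj.symm
    · exact Or.inl rfl
  · left; rw [Finset.mem_singleton] at ha hb; rw [ha, hb]
  · rw [Multiset.eq_of_mem_replicate hrep] at ha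
    exact absurd ha (Finset.notMem_empty a)

lemma toPart_stable (hM : IsMatchingSet G M) (hk : k ≤ M.card) {n : ℕ}
    (hn : Fintype.card V = n) : IsStablePartition Gᶜ (n - k) (toPart M k) :=
  ⟨by rw [toPart_card hM hk, hn], toPart_sum hM, toPart_indep hM⟩

/-- Filtering the parts of cardinality 2 recovers the matching. -/
lemma filter_two {S : Finset V} (hd : ∀ e ∈ M, ¬ e.IsDiag) (j : ℕ) :
    (M.val.map sFin + S.val.map (fun w => ({w} : Finset V))
      + Multiset.replicate j ∅).filter (fun s => s.card = 2) = M.val.map sFin := by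
  rw [Multiset.filter_add, Multiset.filter_add]
  have h1 : (M.val.map sFin).filter (fun s => s.card = 2) = M.val.map sFin := by
    rw [Multiset.filter_map]
    congr 1
    rw [Multiset.filter_eq_self]
    intro e he
    exact sFin_card (hd e he)
  have h2 : (S.val.map (fun w => ({w} : Finset V))).filter (fun s => s.card = 2)
      = 0 := by
    rw [Multiset.filter_map, Multiset.filter_eq_nil.mpr, Multiset.map_zero]
    intro w _
    simp [Function.comp]
  have h3 : (Multiset.replicate j (∅ : Finset V)).filter (fun s => s.card = 2) = 0 := by
    rw [Multiset.filter_eq_nil]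
    intro s hs
    rw [Multiset.eq_of_mem_replicate hs]
    simp
  rw [h1, h2, h3, add_zero, add_zero]

lemma filter_two_toPart (hd : ∀ e ∈ M, ¬ e.IsDiag) :
    (toPart M k).filter (fun s => s.card = 2) = M.val.map sFin :=
  filter_two hd _

lemma toPart_inj {N : Finset (Sym2 V)} (hdM : ∀ e ∈ M, ¬ e.IsDiag)
    (hdN : ∀ e ∈ N, ¬ e.IsDiag) (h : toPart M k = toPart N k) : M = N := by
  have h2 := congrArg (Multiset.filter (fun s => s.card = 2)) h
  rw [filter_two_toPart hdM, filter_two_toPart hdN] at h2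
  exact Finset.val_injective (Multiset.map_injective sFin_injective h2)

lemma toMatch_toPart (hd : ∀ e ∈ M, ¬ e.IsDiag) : toMatch (toPart M k) = M := by
  ext e
  simp only [toMatch, Finset.mem_filter, Finset.mem_univ, true_and]
  constructor
  · rintro ⟨hde, he⟩
    simp only [toPart, Multiset.mem_add, Multiset.mem_map] at he
    rcases he with (⟨f, hf, hef⟩ | ⟨w, _, hw⟩) | hrep
    · rw [← sFin_injective hef]; exact hf
    · exfalso
      have := sFin_card hde
      rw [← hw] at this
      simp at this
    · exfalso
      have := sFin_card hde
      rw [Multiset.eq_of_mem_replicate hrep] at this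
      simp at this
  · intro he
    refine ⟨hd e he, ?_⟩
    simp only [toPart, Multiset.mem_add]
    exact Or.inl (Or.inl (Multiset.mem_map_of_mem _ he))

def phi (k : ℕ) (D : Finset (Sym2 V)) (v : V) : Multiset (Finset V) :=
  D.val.map sFin
  + (Finset.univ.filter fun w => w ≠ v ∧ ∀ e ∈ D, w ∉ e).val.map (fun w => ({w} : Finset V))
  + Multiset.replicate (D.card + 1 - k) ∅

lemma eraseVtx_toPart (hM : IsMatchingSet G M) (hk : k ≤ M.card) (v : V) :
    eraseVtx (toPart M k) v = phi k (M.filter fun e => v ∉ e) v := by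
  classical
  set D := M.filter (fun e => v ∉ e) with hD
  have hDsub : D ⊆ M := Finset.filter_subset _ _
  have hDmem : ∀ e ∈ D, v ∉ e := fun e he => (Finset.mem_filter.mp he).2
  have hstep : eraseVtx (toPart M k) v
      = M.val.map (fun e => (sFin e).erase v)
      + (unm M).val.map (fun w => ({w} : Finset V).erase v)
      + Multiset.replicate (M.card - k) ∅ := by
    simp only [eraseVtx, toPart, Multiset.map_add, Multiset.map_map,
      Multiset.map_replicate, Function.comp, Finset.erase_empty]
  by_cases hv : ∀ e ∈ M, v ∉ e
  · -- v unmatched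
    have hDM : D = M := Finset.filter_true_of_mem hv
    set W := Finset.univ.filter (fun w => w ≠ v ∧ ∀ e ∈ M, w ∉ e) with hW
    have hvW : v ∉ W := fun h => absurd rfl (Finset.mem_filter.mp h).2.1
    have hins : unm M = insert v W := by
      ext x
      simp only [unm, hW, Finset.mem_insert, Finset.mem_filter, Finset.mem_univ, true_and]
      constructor
      · intro hx
        by_cases hxv : x = v
        · exact Or.inl hxv
        · exact Or.inr ⟨hxv, hx⟩
      · rintro (rfl | ⟨_, hx⟩)
        · exact hv
        · exact hx
    have h1 : M.val.map (fun e => (sFin e).erase v) = M.val.map sFin :=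
      Multiset.map_congr rfl fun e he =>
        Finset.erase_eq_of_notMem (fun hmem => hv e he (mem_sFin.mp hmem))
    have h2 : (unm M).val.map (fun w => ({w} : Finset V).erase v)
        = ∅ ::ₘ W.val.map (fun w => ({w} : Finset V)) := by
      rw [hins, Finset.insert_val_of_notMem hvW, Multiset.map_cons,
        Finset.erase_singleton]
      congr 1
      refine Multiset.map_congr rfl fun w hw => ?_
      have hwv : w ≠ v := ((Finset.mem_filter.mp hw).2).1
      exact Finset.erase_eq_of_notMem (by simp [Ne.symm hwv])
    rw [hstep, h1, h2, phi, hDM, ← hW,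
      (by omega : M.card + 1 - k = (M.card - k) + 1), Multiset.replicate_succ]
    simp only [← Multiset.singleton_add, ← add_assoc]
    abel
  · -- v matched by a unique edge e₀ = s(v,a)
    push_neg at hv
    obtain ⟨e₀, he₀, hve₀⟩ := hv
    obtain ⟨a, rfl⟩ := Sym2.mem_iff_exists.mp hve₀
    have hav : a ≠ v := by
      intro h
      exact not_diag_of_mem hM he₀ (by rw [h]; exact Sym2.mk_isDiag_iff.mpr rfl)
    have huniq : ∀ e ∈ M, v ∈ e → e = s(v, a) := by
      intro e he hv'
      by_contra hne
      exact hM.2 e he _ he₀ hne v hv' hve₀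
    have hC : M.filter (fun e => v ∈ e) = {s(v, a)} := by
      rw [Finset.eq_singleton_iff_unique_mem]
      exact ⟨Finset.mem_filter.mpr ⟨he₀, hve₀⟩,
        fun e he => huniq e (Finset.mem_filter.mp he).1 (Finset.mem_filter.mp he).2⟩
    have hsplit : M.val = s(v, a) ::ₘ D.val := by
      have h := Multiset.filter_add_not (fun e => v ∈ e) M.val
      rw [← Finset.filter_val, ← Finset.filter_val, hC] at h
      rw [← h]
      rfl
    have hcardM : M.card = D.card + 1 := by
      have h := congrArg Multiset.card hsplit
      rw [Multiset.card_cons] at h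
      exact h
    have h1 : M.val.map (fun e => (sFin e).erase v)
        = ({a} : Finset V) ::ₘ D.val.map sFin := by
      rw [hsplit, Multiset.map_cons]
      congr 1
      · show (sFin s(v, a)).erase v = {a}
        rw [sFin_mk]
        exact Finset.erase_insert (by simpa using Ne.symm hav)
      · exact Multiset.map_congr rfl fun e he =>
          Finset.erase_eq_of_notMem
            (fun hmem => hDmem e (by exact he) (mem_sFin.mp hmem))
    have h2 : (unm M).val.map (fun w => ({w} : Finset V).erase v)
        = (unm M).val.map (fun w => ({w} : Finset V)) := by
      refine Multiset.map_congr rfl fun w hw => ?_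
      have hwv : w ≠ v := by
        rintro rfl
        exact (Finset.mem_filter.mp hw).2 _ he₀ hve₀
      exact Finset.erase_eq_of_notMem (by simp [Ne.symm hwv])
    have hW : (Finset.univ.filter fun w => w ≠ v ∧ ∀ e ∈ D, w ∉ e)
        = insert a (unm M) := by
      ext w
      simp only [Finset.mem_filter, Finset.mem_univ, true_and, Finset.mem_insert, unm]
      constructor
      · rintro ⟨hwv, hw⟩
        by_cases hwe : w ∈ s(v, a)
        · rw [Sym2.mem_iff] at hwe
          exact Or.inl (hwe.resolve_left hwv)
        · refine Or.inr (fun e he => ?_)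
          by_cases hvine : v ∈ e
          · rw [huniq e he hvine]; exact hwe
          · exact hw e (Finset.mem_filter.mpr ⟨he, hvine⟩)
      · rintro (hwa | hw)
        · rw [hwa]
          refine ⟨hav, fun e he hmem => ?_⟩
          have heM : e ∈ M := hDsub he
          have hne : e ≠ s(v, a) := fun h => hDmem e he (by rw [h]; exact hve₀)
          exact hM.2 e heM _ he₀ hne a hmem (Sym2.mem_mk_right v a)
        · refine ⟨?_, fun e he => hw e (hDsub he)⟩
          rintro rfl
          exact hw _ he₀ hve₀
    have haunm : a ∉ unm M := by
      intro h
      exact (Finset.mem_filter.mp h).2 _ he₀ (Sym2.mem_mk_right v a)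
    have hcard : D.card + 1 - k = M.card - k := by omega
    rw [hstep, h1, h2, phi, hW, Finset.insert_val_of_notMem haunm,
      Multiset.map_cons, hcard]
    simp only [← Multiset.singleton_add, ← add_assoc]
    abel

lemma matchDel_eq_coe (M : Finset (Sym2 V)) (v : V) :
    matchDel M v = ↑(M.filter fun e => v ∉ e) := by
  ext e
  simp [matchDel, and_comm]

lemma filter_two_phi {D : Finset (Sym2 V)} (hd : ∀ e ∈ D, ¬ e.IsDiag) (v : V) :
    (phi k D v).filter (fun s => s.card = 2) = D.val.map sFin :=
  filter_two hd _

lemma erase_iff_del {N : Finset (Sym2 V)} (hM : IsMatchingSet G M)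
    (hN : IsMatchingSet G N) (hkM : k ≤ M.card) (hkN : k ≤ N.card) (v : V) :
    eraseVtx (toPart M k) v = eraseVtx (toPart N k) v ↔ matchDel M v = matchDel N v := by
  rw [eraseVtx_toPart hM hkM v, eraseVtx_toPart hN hkN v, matchDel_eq_coe, matchDel_eq_coe]
  constructor
  · intro h
    have h2 := congrArg (Multiset.filter fun s => s.card = 2) h
    rw [filter_two_phi (fun e he => not_diag_of_mem hM (Finset.filter_subset _ _ he)) v,
      filter_two_phi (fun e he => not_diag_of_mem hN (Finset.filter_subset _ _ he)) v] at h2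
    rw [Finset.val_injective (Multiset.map_injective sFin_injective h2)]
  · intro h
    rw [Finset.coe_injective h]

end G

section P
variable {P : Multiset (Finset V)}

lemma sum_count_eq (x : V) (P : Multiset (Finset V)) :
    (P.map fun s => Multiset.count x s.val).sum
      = Multiset.card (P.filter fun s => x ∈ s) := by
  induction P using Multiset.induction_on with
  | empty => simp
  | cons a t ih =>
    by_cases hx : x ∈ a
    · simp [Multiset.filter_cons, hx, ih, Multiset.count_eq_one_of_mem a.nodup hx, add_comm]
    · simp [Multiset.filter_cons, hx, ih,
        Multiset.count_eq_zero_of_notMem (show x ∉ a.val from hx)]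

lemma count_one (hs : (P.map Finset.val).sum = (Finset.univ : Finset V).val) (x : V) :
    Multiset.card (P.filter fun s => x ∈ s) = 1 := by
  have h1 : Multiset.count x ((P.map Finset.val).sum) = 1 := by
    rw [hs]
    exact Multiset.count_eq_one_of_mem Finset.univ.nodup (Finset.mem_univ x)
  rw [Multiset.count_sum] at h1
  rw [← sum_count_eq, h1]

lemma part_exists (hs : (P.map Finset.val).sum = (Finset.univ : Finset V).val) (x : V) :
    ∃ s ∈ P, x ∈ s := by
  have h := count_one hs x
  obtain ⟨a, ha⟩ := Multiset.card_eq_one.mp h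
  have : a ∈ P.filter fun s => x ∈ s := by rw [ha]; exact Multiset.mem_singleton_self a
  obtain ⟨haP, hax⟩ := Multiset.mem_filter.mp this
  exact ⟨a, haP, hax⟩

lemma part_unique (hs : (P.map Finset.val).sum = (Finset.univ : Finset V).val)
    {x : V} {s t : Finset V} (hsP : s ∈ P) (htP : t ∈ P) (hxs : x ∈ s) (hxt : x ∈ t) :
    s = t := by
  obtain ⟨a, ha⟩ := Multiset.card_eq_one.mp (count_one hs x)
  have h1 : s ∈ P.filter (fun s => x ∈ s) := Multiset.mem_filter.mpr ⟨hsP, hxs⟩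
  have h2 : t ∈ P.filter (fun s => x ∈ s) := Multiset.mem_filter.mpr ⟨htP, hxt⟩
  rw [ha, Multiset.mem_singleton] at h1 h2
  rw [h1, h2]

lemma count_le_one (hs : (P.map Finset.val).sum = (Finset.univ : Finset V).val)
    {s : Finset V} {x : V} (hx : x ∈ s) : P.count s ≤ 1 := by
  have h := count_one hs x
  calc P.count s = (P.filter fun t => x ∈ t).count s := by
        rw [Multiset.count_filter_of_pos (p := fun t => x ∈ t) hx]
    _ ≤ Multiset.card (P.filter fun t => x ∈ t) := Multiset.count_le_card _ _
    _ = 1 := h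

lemma part_card_le {G : SimpleGraph V} (hG : G.CliqueFree 3)
    (hind : ∀ s ∈ P, ∀ a ∈ s, ∀ b ∈ s, ¬ Gᶜ.Adj a b) :
    ∀ s ∈ P, s.card ≤ 2 := by
  intro s hsP
  by_contra h
  push_neg at h
  obtain ⟨t, hts, ht3⟩ := Finset.exists_subset_card_eq (Nat.succ_le_of_lt h)
  refine hG t ⟨?_, ht3⟩
  intro a ha b hb hab
  have := hind s hsP a (hts ha) b (hts hb)
  rw [compl_adj] at this
  push_neg at this
  exact this hab

lemma decomp (hle : ∀ s ∈ P, s.card ≤ 2) :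
    P = P.filter (fun s => s.card = 2) + P.filter (fun s => s.card = 1)
      + P.filter (fun s => s.card = 0) := by
  rw [Multiset.ext]
  intro s
  simp only [Multiset.count_add, Multiset.count_filter]
  by_cases hmem : s ∈ P
  · have := hle s hmem
    have h012 : s.card = 0 ∨ s.card = 1 ∨ s.card = 2 := by omega
    rcases h012 with h | h | h <;> simp [h]
  · simp [Multiset.count_eq_zero_of_notMem hmem]

end P

section Inv
variable {P : Multiset (Finset V)} {G : SimpleGraph V}

lemma toMatch_matching (hs : (P.map Finset.val).sum = (Finset.univ : Finset V).val)
    (hind : ∀ s ∈ P, ∀ a ∈ s, ∀ b ∈ s, ¬ Gᶜ.Adj a b) :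
    IsMatchingSet G (toMatch P) := by
  constructor
  · intro e he
    obtain ⟨hde, hmem⟩ := (Finset.mem_filter.mp he).2
    induction e with | _ x y =>
    rw [Sym2.mk_isDiag_iff] at hde
    rw [SimpleGraph.mem_edgeSet]
    have h := hind _ hmem x (by simp) y (by simp)
    rw [compl_adj] at h
    push_neg at h
    exact h hde
  · intro e he f hf hne x hxe hxf
    have h1 := (Finset.mem_filter.mp he).2.2
    have h2 := (Finset.mem_filter.mp hf).2.2
    have := part_unique hs h1 h2 (mem_sFin.mpr hxe) (mem_sFin.mpr hxf)
    exact hne (sFin_injective this)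

lemma nodup_filter_card (hs : (P.map Finset.val).sum = (Finset.univ : Finset V).val)
    {m : ℕ} (hm : 0 < m) : (P.filter fun s => s.card = m).Nodup := by
  rw [Multiset.nodup_iff_count_le_one]
  intro s
  rw [Multiset.count_filter]
  by_cases h2 : s.card = m
  · obtain ⟨x, hx⟩ := Finset.card_pos.mp (h2 ▸ hm)
    simpa [h2] using count_le_one hs hx
  · simp [h2]

lemma partA (hs : (P.map Finset.val).sum = (Finset.univ : Finset V).val) :
    P.filter (fun s => s.card = 2) = (toMatch P).val.map sFin := by
  refine (Multiset.Nodup.ext (nodup_filter_card hs (by norm_num))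
    ((toMatch P).nodup.map sFin_injective)).mpr fun s => ?_
  rw [Multiset.mem_filter, Multiset.mem_map]
  constructor
  · rintro ⟨hsP, h2⟩
    obtain ⟨x, y, hxy, rfl⟩ := Finset.card_eq_two.mp h2
    refine ⟨s(x, y), ?_, rfl⟩
    show s(x, y) ∈ toMatch P
    exact Finset.mem_filter.mpr ⟨Finset.mem_univ _,
      Sym2.mk_isDiag_iff.not.mpr hxy, hsP⟩
  · rintro ⟨e, he, rfl⟩
    have h := (Finset.mem_filter.mp (show e ∈ toMatch P from he)).2
    exact ⟨h.2, sFin_card h.1⟩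

lemma key_unm (hs : (P.map Finset.val).sum = (Finset.univ : Finset V).val)
    (hG : G.CliqueFree 3)
    (hind : ∀ s ∈ P, ∀ a ∈ s, ∀ b ∈ s, ¬ Gᶜ.Adj a b) (w : V) :
    ({w} : Finset V) ∈ P ↔ w ∈ unm (toMatch P) := by
  constructor
  · intro h1
    refine Finset.mem_filter.mpr ⟨Finset.mem_univ w, fun e he hwe => ?_⟩
    have hde := (Finset.mem_filter.mp he).2.1
    have hmem := (Finset.mem_filter.mp he).2.2
    have := part_unique hs h1 hmem (Finset.mem_singleton_self w) (mem_sFin.mpr hwe)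
    have hc := sFin_card hde
    rw [← this] at hc
    simp at hc
  · intro hw
    obtain ⟨s, hsP, hws⟩ := part_exists hs w
    have hle := part_card_le hG hind s hsP
    have hpos : 0 < s.card := Finset.card_pos.mpr ⟨w, hws⟩
    have h12 : s.card = 1 ∨ s.card = 2 := by omega
    rcases h12 with h | h
    · obtain ⟨a, rfl⟩ := Finset.card_eq_one.mp h
      rw [Finset.mem_singleton] at hws
      rw [hws]
      exact hsP
    · exfalso
      obtain ⟨x, y, hxy, rfl⟩ := Finset.card_eq_two.mp h
      have he : s(x, y) ∈ toMatch P := Finset.mem_filter.mpr ⟨Finset.mem_univ _,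
        Sym2.mk_isDiag_iff.not.mpr hxy, hsP⟩
      have := (Finset.mem_filter.mp hw).2 _ he
      rw [Finset.mem_insert, Finset.mem_singleton] at hws
      rw [Sym2.mem_iff] at this
      tauto

lemma partB (hs : (P.map Finset.val).sum = (Finset.univ : Finset V).val)
    (hG : G.CliqueFree 3)
    (hind : ∀ s ∈ P, ∀ a ∈ s, ∀ b ∈ s, ¬ Gᶜ.Adj a b) :
    P.filter (fun s => s.card = 1)
      = (unm (toMatch P)).val.map (fun w => ({w} : Finset V)) := by
  refine (Multiset.Nodup.ext (nodup_filter_card hs (by norm_num))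
    ((unm (toMatch P)).nodup.map fun a b h => Finset.singleton_injective h)).mpr fun s => ?_
  rw [Multiset.mem_filter, Multiset.mem_map]
  constructor
  · rintro ⟨hsP, h1⟩
    obtain ⟨a, rfl⟩ := Finset.card_eq_one.mp h1
    exact ⟨a, (key_unm hs hG hind a).mp hsP, rfl⟩
  · rintro ⟨w, hw, rfl⟩
    exact ⟨(key_unm hs hG hind w).mpr hw, Finset.card_singleton w⟩

lemma card_sum_eq (hs : (P.map Finset.val).sum = (Finset.univ : Finset V).val) :
    (P.map Finset.card).sum = Fintype.card V := by
  have h2 : Multiset.card (P.map Finset.val).sum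
      = ((P.map Finset.val).map Multiset.card).sum := Multiset.card_join _
  rw [hs, Multiset.map_map] at h2
  exact h2.symm

lemma card_replicate_of_eq {m : ℕ} :
    (P.filter fun s => s.card = m).map Finset.card
      = Multiset.replicate (Multiset.card (P.filter fun s => s.card = m)) m := by
  have h : (P.filter fun s => s.card = m).map Finset.card
      = Multiset.replicate
          (Multiset.card ((P.filter fun s => s.card = m).map Finset.card)) m :=
    Multiset.eq_replicate_card.mpr (fun b hb => by
      obtain ⟨t, ht, rfl⟩ := Multiset.mem_map.mp hb
      exact (Multiset.mem_filter.mp ht).2)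
  rwa [Multiset.card_map] at h

lemma key_counts {n k : ℕ} (hG : G.CliqueFree 3)
    (hP : IsStablePartition Gᶜ (n - k) P) (hn : Fintype.card V = n) (hk : k ≤ n) :
    k ≤ (toMatch P).card ∧
      (P.filter fun s => s.card = 0)
        = Multiset.replicate ((toMatch P).card - k) ∅ := by
  obtain ⟨hc, hs, hind⟩ := hP
  have hle := part_card_le hG hind
  set a := Multiset.card (P.filter fun s => s.card = 2) with ha
  set b := Multiset.card (P.filter fun s => s.card = 1) with hb
  set c := Multiset.card (P.filter fun s => s.card = 0) with hcdef
  have hMa : (toMatch P).card = a := by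
    have := congrArg Multiset.card (partA hs)
    rw [Multiset.card_map] at this
    exact this.symm
  have habc : a + b + c = n - k := by
    rw [ha, hb, hcdef, ← Multiset.card_add, ← Multiset.card_add, ← decomp hle, hc]
  have hsum2 : 2 * a + b = n := by
    have h := card_sum_eq hs
    rw [hn] at h
    conv_lhs at h => rw [decomp hle]
    rw [Multiset.map_add, Multiset.map_add, Multiset.sum_add, Multiset.sum_add,
      card_replicate_of_eq, card_replicate_of_eq, card_replicate_of_eq,
      Multiset.sum_replicate, Multiset.sum_replicate, Multiset.sum_replicate] at h
    simp only [smul_eq_mul, mul_zero, mul_one, add_zero] at h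
    omega
  have hck : c + k = a := by omega
  constructor
  · omega
  · have : (P.filter fun s => s.card = 0) = Multiset.replicate c ∅ := by
      rw [hcdef]
      exact Multiset.eq_replicate_card.mpr
        (fun s hsf => Finset.card_eq_zero.mp (Multiset.mem_filter.mp hsf).2)
    rw [this, hMa]
    congr 1
    omega

lemma toPart_toMatch {n k : ℕ} (hG : G.CliqueFree 3)
    (hP : IsStablePartition Gᶜ (n - k) P) (hn : Fintype.card V = n) (hk : k ≤ n) :
    toPart (toMatch P) k = P := by
  obtain ⟨hc, hs, hind⟩ := hP
  conv_rhs => rw [decomp (part_card_le hG hind)]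
  rw [toPart, ← partA hs, ← partB hs hG hind,
    ← (key_counts hG ⟨hc, hs, hind⟩ hn hk).2]

end Inv


/-- **Matching graphs are Bell coloring graphs.** If `G` is a triangle-free
graph of order `n` and `k ≤ n`, then `M_k(G) ≅ B_{n−k}(Ḡ)`. -/
theorem matchingGraph_iso_bellGraph (G : SimpleGraph V) (hG : G.CliqueFree 3)
    (n k : ℕ) (hn : Fintype.card V = n) (hk : k ≤ n) :
    Nonempty (matchingGraph G k ≃g bellGraph Gᶜ (n - k)) := by
  classical
  have hd : ∀ (M : Finset (Sym2 V)), IsMatchingSet G M → ∀ e ∈ M, ¬ e.IsDiag :=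
    fun M hM e he => not_diag_of_mem hM he
  refine ⟨⟨⟨fun M => ⟨toPart M.1 k, toPart_stable M.2.1 M.2.2 hn⟩,
      fun P => ⟨toMatch P.1, toMatch_matching P.2.2.1 P.2.2.2,
        (key_counts hG P.2 hn hk).1⟩,
      fun M => Subtype.ext (toMatch_toPart (hd M.1 M.2.1)),
      fun P => Subtype.ext (toPart_toMatch hG P.2 hn hk)⟩, ?_⟩⟩
  intro M N
  show (_ ≠ _ ∧ ∃ v : V, _) ↔ (_ ≠ _ ∧ ∃ v : V, _)
  apply and_congr
  · rw [Ne, Ne, not_iff_not, Subtype.ext_iff, Subtype.ext_iff]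
    show toPart M.1 k = toPart N.1 k ↔ M.1 = N.1
    exact ⟨fun h => Finset.val_injective (Multiset.map_injective sFin_injective
        (by rw [← filter_two_toPart (hd _ M.2.1), ← filter_two_toPart (hd _ N.2.1), h])),
      fun h => by rw [h]⟩
  · exact exists_congr fun v => erase_iff_del M.2.1 N.2.1 M.2.2 N.2.2 v
end

section
/- Let G be a finite simple graph of order 2k + 1 and let M_1 ≠ M_2 be near-perfect matchings of G, with v the unmatched vertex of M_1 and u the unmatched vertex of M_2. Then the following are equivalent: (1) there exists w ∈ V(G) with G⟨M_1⟩ − w = G⟨M_2⟩ − w; (2) there exists w ∈ V(G) with M_1 = (M_2 \ {vw}) ∪ {uw}; (3) there exists w ∈ V(G) with uw ∈ M_1, vw ∈ M_2, and G⟨M_1⟩ − u − v − w = G⟨M_2⟩ − u − v − w. -/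
open SimpleGraph

variable {V : Type*} [Fintype V] [DecidableEq V]

section Aux
variable {V : Type*} [Fintype V] [DecidableEq V]

lemma sym2_card_filter {e : Sym2 V} (h : ¬ e.IsDiag) :
    (Finset.univ.filter (· ∈ e)).card = 2 := by
  induction e using Sym2.inductionOn with
  | hf a b =>
    rw [Sym2.mk_isDiag_iff] at h
    have : Finset.univ.filter (· ∈ s(a, b)) = {a, b} := by
      ext x; simp [Sym2.mem_iff]
    rw [this, Finset.card_pair h]

lemma cover_lemma {G : SimpleGraph V} {k : ℕ} (hcard : Fintype.card V = 2 * k + 1)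
    {M : Finset (Sym2 V)} (hM : IsMatchingSet G M) (hc : M.card = k)
    {v : V} (hv : ∀ e ∈ M, v ∉ e) {x : V} (hx : x ≠ v) : ∃ e ∈ M, x ∈ e := by
  classical
  set C := M.biUnion (fun e => Finset.univ.filter (· ∈ e)) with hC
  have hdisj : ∀ e ∈ M, ∀ f ∈ M, e ≠ f →
      Disjoint (Finset.univ.filter (· ∈ e)) (Finset.univ.filter (· ∈ f)) := by
    intro e he f hf hef
    rw [Finset.disjoint_left]
    intro a ha ha'
    exact hM.2 e he f hf hef a (Finset.mem_filter.1 ha).2 (Finset.mem_filter.1 ha').2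
  have hCcard : C.card = 2 * k := by
    rw [hC, Finset.card_biUnion hdisj]
    have : ∀ e ∈ M, (Finset.univ.filter (· ∈ e)).card = 2 := by
      intro e he
      exact sym2_card_filter (G.not_isDiag_of_mem_edgeSet (hM.1 he))
    rw [Finset.sum_congr rfl this, Finset.sum_const, hc, smul_eq_mul, Nat.mul_comm]
  have hsub : C ⊆ Finset.univ.erase v := by
    intro a ha
    obtain ⟨e, he, hae⟩ := Finset.mem_biUnion.1 ha
    refine Finset.mem_erase.2 ⟨?_, Finset.mem_univ a⟩
    rintro rfl
    exact hv e he (Finset.mem_filter.1 hae).2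
  have hsize : (Finset.univ.erase v).card ≤ C.card := by
    rw [Finset.card_erase_of_mem (Finset.mem_univ v), Finset.card_univ, hcard, hCcard]
    omega
  have hCeq : C = Finset.univ.erase v := Finset.eq_of_subset_of_card_le hsub hsize
  have : x ∈ C := hCeq ▸ Finset.mem_erase.2 ⟨hx, Finset.mem_univ x⟩
  obtain ⟨e, he, hxe⟩ := Finset.mem_biUnion.1 this
  exact ⟨e, he, (Finset.mem_filter.1 hxe).2⟩

end Aux

/-- **Adjacency of near-perfect matchings.** Let `G` have order `2k + 1`, and
let `M₁ ≠ M₂` be near-perfect matchings of `G` (matchings of size `k`), with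
`v` the unmatched vertex of `M₁` and `u` the unmatched vertex of `M₂`. The
following are equivalent:
(1) `G⟨M₁⟩ − w = G⟨M₂⟩ − w` for some `w`;
(2) `M₁ = (M₂ \ {vw}) ∪ {uw}` for some `w`;
(3) `uw ∈ M₁`, `vw ∈ M₂` and `G⟨M₁⟩ − u − v − w = G⟨M₂⟩ − u − v − w` for some `w`. -/
theorem nearPerfect_adjacency (G : SimpleGraph V) (k : ℕ)
    (hcard : Fintype.card V = 2 * k + 1)
    (M₁ M₂ : Finset (Sym2 V)) (hM₁ : IsMatchingSet G M₁) (hM₂ : IsMatchingSet G M₂)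
    (hc₁ : M₁.card = k) (hc₂ : M₂.card = k) (hne : M₁ ≠ M₂)
    (v u : V) (hv : ∀ e ∈ M₁, v ∉ e) (hu : ∀ e ∈ M₂, u ∉ e) :
    ((∃ w : V, matchDel M₁ w = matchDel M₂ w) ↔
      (∃ w : V, M₁ = insert s(u, w) (M₂.erase s(v, w)))) ∧
    ((∃ w : V, matchDel M₁ w = matchDel M₂ w) ↔
      (∃ w : V, s(u, w) ∈ M₁ ∧ s(v, w) ∈ M₂ ∧
        {e : Sym2 V | e ∈ M₁ ∧ u ∉ e ∧ v ∉ e ∧ w ∉ e} =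
          {e : Sym2 V | e ∈ M₂ ∧ u ∉ e ∧ v ∉ e ∧ w ∉ e})) := by
  classical
  -- (2) ⇒ (1)
  have dir2 : (∃ w : V, M₁ = insert s(u, w) (M₂.erase s(v, w))) →
      ∃ w : V, matchDel M₁ w = matchDel M₂ w := by
    rintro ⟨w, hw⟩
    refine ⟨w, ?_⟩
    ext e
    simp only [matchDel, Set.mem_setOf_eq]
    constructor
    · rintro ⟨he, hwe⟩
      rw [hw] at he
      rcases Finset.mem_insert.1 he with h | h
      · exact absurd (h ▸ Sym2.mem_iff.2 (Or.inr rfl)) hwe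
      · exact ⟨Finset.mem_of_mem_erase h, hwe⟩
    · rintro ⟨he, hwe⟩
      have hne' : e ≠ s(v, w) := by
        rintro rfl; exact hwe (Sym2.mem_iff.2 (Or.inr rfl))
      exact ⟨hw ▸ Finset.mem_insert_of_mem (Finset.mem_erase.2 ⟨hne', he⟩), hwe⟩
  -- (3) ⇒ (1)
  have dir3 : (∃ w : V, s(u, w) ∈ M₁ ∧ s(v, w) ∈ M₂ ∧
      {e : Sym2 V | e ∈ M₁ ∧ u ∉ e ∧ v ∉ e ∧ w ∉ e} =
        {e : Sym2 V | e ∈ M₂ ∧ u ∉ e ∧ v ∉ e ∧ w ∉ e}) →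
      ∃ w : V, matchDel M₁ w = matchDel M₂ w := by
    rintro ⟨w, h1, h2, hset⟩
    refine ⟨w, ?_⟩
    ext e
    simp only [matchDel, Set.mem_setOf_eq]
    constructor
    · rintro ⟨he, hwe⟩
      have hue : u ∉ e := by
        intro hue
        rcases eq_or_ne e s(u, w) with rfl | hne'
        · exact hwe (Sym2.mem_iff.2 (Or.inr rfl))
        · exact hM₁.2 e he _ h1 hne' u hue (Sym2.mem_iff.2 (Or.inl rfl))
      have : e ∈ {e : Sym2 V | e ∈ M₂ ∧ u ∉ e ∧ v ∉ e ∧ w ∉ e} :=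
        hset ▸ ⟨he, hue, hv e he, hwe⟩
      exact ⟨this.1, hwe⟩
    · rintro ⟨he, hwe⟩
      have hve : v ∉ e := by
        intro hve
        rcases eq_or_ne e s(v, w) with rfl | hne'
        · exact hwe (Sym2.mem_iff.2 (Or.inr rfl))
        · exact hM₂.2 e he _ h2 hne' v hve (Sym2.mem_iff.2 (Or.inl rfl))
      have : e ∈ {e : Sym2 V | e ∈ M₁ ∧ u ∉ e ∧ v ∉ e ∧ w ∉ e} :=
        hset.symm ▸ ⟨he, hu e he, hve, hwe⟩
      exact ⟨this.1, hwe⟩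
  -- (1) ⇒ master
  have master : (∃ w : V, matchDel M₁ w = matchDel M₂ w) →
      ∃ w : V, s(u, w) ∈ M₁ ∧ s(v, w) ∈ M₂ ∧
        M₁.erase s(u, w) = M₂.erase s(v, w) := by
    rintro ⟨w, hw⟩
    have hsub12 : ∀ e ∈ M₁, w ∉ e → e ∈ M₂ := by
      intro e he hwe
      have : e ∈ matchDel M₂ w := hw ▸ (show e ∈ matchDel M₁ w from ⟨he, hwe⟩)
      exact this.1
    have hsub21 : ∀ e ∈ M₂, w ∉ e → e ∈ M₁ := by
      intro e he hwe
      have : e ∈ matchDel M₁ w := hw.symm ▸ (show e ∈ matchDel M₂ w from ⟨he, hwe⟩)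
      exact this.1
    have hwv : w ≠ v := by
      rintro rfl
      exact hne (Finset.eq_of_subset_of_card_le
        (fun e he => hsub12 e he (hv e he)) (by rw [hc₁, hc₂]))
    have hwu : w ≠ u := by
      rintro rfl
      exact hne (Finset.eq_of_subset_of_card_le
        (fun e he => hsub21 e he (hu e he)) (by rw [hc₁, hc₂])).symm
    obtain ⟨e₁, he₁, hwe₁⟩ := cover_lemma hcard hM₁ hc₁ hv hwv
    obtain ⟨e₂, he₂, hwe₂⟩ := cover_lemma hcard hM₂ hc₂ hu hwu
    -- s(u,w) ∈ M₁
    have h1 : s(u, w) ∈ M₁ := by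
      obtain ⟨a, ha⟩ : ∃ a : V, e₁ = s(w, a) := by
        induction e₁ using Sym2.inductionOn with
        | hf x y =>
          rcases Sym2.mem_iff.1 hwe₁ with rfl | rfl
          · exact ⟨y, rfl⟩
          · exact ⟨x, Sym2.eq_swap⟩
      subst ha
      have haw : a ≠ w := by
        intro h; subst h
        exact G.not_isDiag_of_mem_edgeSet (hM₁.1 he₁) (Sym2.mk_isDiag_iff.2 rfl)
      rcases eq_or_ne a u with rfl | hau
      · rwa [Sym2.eq_swap] at he₁
      · exfalso
        obtain ⟨g, hg, hag⟩ := cover_lemma hcard hM₂ hc₂ hu hau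
        by_cases hwg : w ∈ g
        · have : g = s(w, a) := Sym2.eq_of_ne_mem haw.symm hwg hag hwe₁
            (Sym2.mem_iff.2 (Or.inr rfl))
          subst this
          apply hne
          refine Finset.eq_of_subset_of_card_le (fun e he => ?_) (by rw [hc₁, hc₂])
          by_cases hwe : w ∈ e
          · have : e = s(w, a) := by
              by_contra hne'
              exact hM₁.2 e he _ he₁ hne' w hwe hwe₁
            exact this ▸ hg
          · exact hsub12 e he hwe
        · have hgM₁ : g ∈ M₁ := hsub21 g hg hwg
          have hge₁ : g ≠ s(w, a) := by rintro rfl; exact hwg hwe₁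
          exact hM₁.2 g hgM₁ _ he₁ hge₁ a hag (Sym2.mem_iff.2 (Or.inr rfl))
    -- s(v,w) ∈ M₂
    have h2 : s(v, w) ∈ M₂ := by
      obtain ⟨b, hb⟩ : ∃ b : V, e₂ = s(w, b) := by
        induction e₂ using Sym2.inductionOn with
        | hf x y =>
          rcases Sym2.mem_iff.1 hwe₂ with rfl | rfl
          · exact ⟨y, rfl⟩
          · exact ⟨x, Sym2.eq_swap⟩
      subst hb
      have hbw : b ≠ w := by
        intro h; subst h
        exact G.not_isDiag_of_mem_edgeSet (hM₂.1 he₂) (Sym2.mk_isDiag_iff.2 rfl)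
      rcases eq_or_ne b v with rfl | hbv
      · rwa [Sym2.eq_swap] at he₂
      · exfalso
        obtain ⟨f, hf, hbf⟩ := cover_lemma hcard hM₁ hc₁ hv hbv
        by_cases hwf : w ∈ f
        · have : f = s(w, b) := Sym2.eq_of_ne_mem hbw.symm hwf hbf hwe₂
            (Sym2.mem_iff.2 (Or.inr rfl))
          subst this
          apply hne
          refine (Finset.eq_of_subset_of_card_le (fun e he => ?_)
            (by rw [hc₁, hc₂])).symm
          by_cases hwe : w ∈ e
          · have : e = s(w, b) := by
              by_contra hne'
              exact hM₂.2 e he _ he₂ hne' w hwe hwe₂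
            exact this ▸ hf
          · exact hsub21 e he hwe
        · have hfM₂ : f ∈ M₂ := hsub12 f hf hwf
          have hfe₂ : f ≠ s(w, b) := by rintro rfl; exact hwf hwe₂
          exact hM₂.2 f hfM₂ _ he₂ hfe₂ b hbf (Sym2.mem_iff.2 (Or.inr rfl))
    refine ⟨w, h1, h2, ?_⟩
    ext e
    simp only [Finset.mem_erase]
    constructor
    · rintro ⟨hne', he⟩
      have hwe : w ∉ e := by
        intro hwe
        exact hne' (by
          by_contra h
          exact hM₁.2 e he _ h1 h w hwe (Sym2.mem_iff.2 (Or.inr rfl)))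
      refine ⟨?_, hsub12 e he hwe⟩
      rintro rfl; exact hwe (Sym2.mem_iff.2 (Or.inr rfl))
    · rintro ⟨hne', he⟩
      have hwe : w ∉ e := by
        intro hwe
        exact hne' (by
          by_contra h
          exact hM₂.2 e he _ h2 h w hwe (Sym2.mem_iff.2 (Or.inr rfl)))
      refine ⟨?_, hsub21 e he hwe⟩
      rintro rfl; exact hwe (Sym2.mem_iff.2 (Or.inr rfl))
  constructor
  · constructor
    · intro h
      obtain ⟨w, h1, h2, h3⟩ := master h
      exact ⟨w, by rw [← h3, Finset.insert_erase h1]⟩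
    · exact dir2
  · constructor
    · intro h
      obtain ⟨w, h1, h2, h3⟩ := master h
      refine ⟨w, h1, h2, ?_⟩
      ext e
      simp only [Set.mem_setOf_eq]
      constructor
      · rintro ⟨he, hue, hve, hwe⟩
        have hne' : e ≠ s(u, w) := by
          rintro rfl; exact hue (Sym2.mem_iff.2 (Or.inl rfl))
        have : e ∈ M₂.erase s(v, w) := h3 ▸ Finset.mem_erase.2 ⟨hne', he⟩
        exact ⟨Finset.mem_of_mem_erase this, hue, hve, hwe⟩
      · rintro ⟨he, hue, hve, hwe⟩
        have hne' : e ≠ s(v, w) := by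
          rintro rfl; exact hve (Sym2.mem_iff.2 (Or.inl rfl))
        have : e ∈ M₁.erase s(u, w) := h3.symm ▸ Finset.mem_erase.2 ⟨hne', he⟩
        exact ⟨Finset.mem_of_mem_erase this, hue, hve, hwe⟩
    · exact dir3
end

section
/- For i = 1, 2, let H_i be a finite simple graph of odd order with a uniquely unmatched vertex v_i (i.e., H_i − v_i has a unique perfect matching), let k_i = (|V(H_i)| − 1)/2, and let M_{v_i} be the unique near-perfect matching of H_i leaving v_i unmatched. Let G be the graph obtained from the disjoint union H_1 ⊔ H_2 by identifying v_1 with v_2. Then the near-perfect matching graph M_{k_1 + k_2}(G) is isomorphic to the graph obtained from the disjoint union M_{k_1}(H_1) ⊔ M_{k_2}(H_2) by identifying the vertex M_{v_1} with the vertex M_{v_2}. -/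
open SimpleGraph

variable {V : Type*} [Fintype V] [DecidableEq V]

/-- The graph `(A ⊔ B)/(a ∼ b)` obtained from the disjoint union of `A` and
`B` by identifying the vertex `a` of `A` with the vertex `b` of `B`.  Its
vertex type is `V₁ ⊕ {x : V₂ // x ≠ b}`, where `Sum.inl a` plays the role of
the identified vertex. -/
def glueAt {V₁ V₂ : Type*} (A : SimpleGraph V₁) (B : SimpleGraph V₂) (a : V₁) (b : V₂) :
    SimpleGraph (V₁ ⊕ {x : V₂ // x ≠ b}) where
  Adj x y :=
    match x, y with
    | Sum.inl x₁, Sum.inl y₁ => A.Adj x₁ y₁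
    | Sum.inl x₁, Sum.inr y₂ => x₁ = a ∧ B.Adj b y₂.1
    | Sum.inr x₂, Sum.inl y₁ => y₁ = a ∧ B.Adj b x₂.1
    | Sum.inr x₂, Sum.inr y₂ => B.Adj x₂.1 y₂.1
  symm := by
    constructor
    rintro (x | x) (y | y) h
    · exact h.symm
    · exact h
    · exact h
    · exact h.symm
  loopless := by
    constructor
    rintro (x | x) h
    · exact A.irrefl h
    · exact B.irrefl h

section card
set_option linter.unusedSectionVars false
variable {V : Type*} [Fintype V] [DecidableEq V]

def sym2Fin (e : Sym2 V) : Finset V :=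
  Sym2.lift ⟨fun a b => {a, b}, fun a b => Finset.pair_comm a b⟩ e

@[simp] lemma mem_sym2Fin {e : Sym2 V} {x : V} : x ∈ sym2Fin e ↔ x ∈ e := by
  induction e using Sym2.ind with
  | _ a b => simp [sym2Fin, Sym2.mem_iff]

lemma card_sym2Fin {e : Sym2 V} (h : ¬ e.IsDiag) : (sym2Fin e).card = 2 := by
  induction e using Sym2.ind with
  | _ a b =>
    rw [Sym2.isDiag_iff_proj_eq] at h
    simp [sym2Fin, Finset.card_insert_of_notMem, h]

lemma matching_two_mul_card_le {G : SimpleGraph V} {M : Finset (Sym2 V)}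
    (h : IsMatchingSet G M) : 2 * M.card ≤ Fintype.card V := by
  classical
  have hdisj : ∀ e ∈ M, ∀ f ∈ M, e ≠ f → Disjoint (sym2Fin e) (sym2Fin f) := by
    intro e he f hf hef
    refine Finset.disjoint_left.2 ?_
    intro x hx hx'
    exact h.2 e he f hf hef x (mem_sym2Fin.1 hx) (mem_sym2Fin.1 hx')
  have hcard : (M.biUnion sym2Fin).card = 2 * M.card := by
    rw [Finset.card_biUnion hdisj]
    rw [Finset.sum_congr rfl (fun e he => card_sym2Fin (G.not_isDiag_of_mem_edgeSet (h.1 he)))]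
    simp [Nat.mul_comm]
  calc 2 * M.card = (M.biUnion sym2Fin).card := hcard.symm
    _ ≤ Fintype.card V := Finset.card_le_card (Finset.subset_univ _) |>.trans_eq (Finset.card_univ)
end card

section glue
set_option linter.unusedSectionVars false
set_option linter.unusedVariables false
variable {V₁ V₂ : Type*} [Fintype V₁] [DecidableEq V₁] [Fintype V₂] [DecidableEq V₂]
variable (v₁ : V₁) (v₂ : V₂)

def iot (x : V₂) : V₁ ⊕ {x : V₂ // x ≠ v₂} :=
  if h : x = v₂ then Sum.inl v₁ else Sum.inr ⟨x, h⟩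

lemma iot_eq_inl {y : V₂} {a : V₁} : iot v₁ v₂ y = Sum.inl a ↔ y = v₂ ∧ a = v₁ := by
  unfold iot; split_ifs with h <;> simp_all [eq_comm]

lemma iot_eq_inr {y : V₂} {x : {x : V₂ // x ≠ v₂}} : iot v₁ v₂ y = Sum.inr x ↔ y = x.1 := by
  unfold iot; split_ifs with h
  · simp only [reduceCtorEq, false_iff]; rintro rfl; exact x.2 h
  · rw [Sum.inr.injEq, Subtype.ext_iff]

lemma iot_injective : Function.Injective (iot v₁ v₂) := by
  intro x y h
  unfold iot at h
  split_ifs at h with h1 h2 h2 <;> simp_all [Subtype.ext_iff]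

@[simp] lemma iot_v₂ : iot v₁ v₂ v₂ = Sum.inl v₁ := by simp [iot]

/-- edge embeddings -/
noncomputable abbrev em₁ : Sym2 V₁ → Sym2 (V₁ ⊕ {x : V₂ // x ≠ v₂}) :=
  Sym2.map Sum.inl
noncomputable abbrev em₂ : Sym2 V₂ → Sym2 (V₁ ⊕ {x : V₂ // x ≠ v₂}) :=
  Sym2.map (iot v₁ v₂)

@[simp] lemma em₁_pair {a b : V₁} :
    em₁ (v₂ := v₂) s(a, b) = s((Sum.inl a : V₁ ⊕ {x : V₂ // x ≠ v₂}), Sum.inl b) :=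
  Sym2.map_pair_eq _ _ _

@[simp] lemma em₂_pair {x y : V₂} :
    em₂ v₁ v₂ s(x, y) = s(iot v₁ v₂ x, iot v₁ v₂ y) :=
  Sym2.map_pair_eq _ _ _

lemma em₁_injective : Function.Injective (em₁ (v₂ := v₂) (V₁ := V₁)) :=
  Sym2.map.injective Sum.inl_injective

lemma em₂_injective : Function.Injective (em₂ v₁ v₂) :=
  Sym2.map.injective (iot_injective v₁ v₂)

lemma inl_mem_em₁ {a : V₁} {e : Sym2 V₁} :
    Sum.inl a ∈ em₁ (v₂ := v₂) e ↔ a ∈ e := by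
  rw [Sym2.mem_map]
  constructor
  · rintro ⟨b, hb, h⟩; rw [Sum.inl.injEq] at h; exact h ▸ hb
  · exact fun h => ⟨a, h, rfl⟩

lemma inr_not_mem_em₁ {x : {x : V₂ // x ≠ v₂}} {e : Sym2 V₁} :
    Sum.inr x ∉ em₁ (v₂ := v₂) e := by
  rw [Sym2.mem_map]; rintro ⟨b, _, h⟩; exact absurd h (by simp)

lemma inl_mem_em₂ {a : V₁} {e : Sym2 V₂} :
    Sum.inl a ∈ em₂ v₁ v₂ e ↔ a = v₁ ∧ v₂ ∈ e := by
  rw [Sym2.mem_map]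
  constructor
  · rintro ⟨b, hb, h⟩
    obtain ⟨rfl, rfl⟩ := (iot_eq_inl v₁ v₂).1 h
    exact ⟨rfl, hb⟩
  · rintro ⟨rfl, h⟩; exact ⟨v₂, h, by simp⟩

lemma inr_mem_em₂ {x : {x : V₂ // x ≠ v₂}} {e : Sym2 V₂} :
    Sum.inr x ∈ em₂ v₁ v₂ e ↔ x.1 ∈ e := by
  rw [Sym2.mem_map]
  constructor
  · rintro ⟨b, hb, h⟩
    obtain rfl := (iot_eq_inr v₁ v₂).1 h
    exact hb
  · intro h
    exact ⟨x.1, h, (iot_eq_inr v₁ v₂).2 rfl⟩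

lemma em₁_ne_em₂ {e₁ : Sym2 V₁} {e₂ : Sym2 V₂} (h : ¬ e₁.IsDiag ∨ ¬ e₂.IsDiag) :
    em₁ (v₂ := v₂) e₁ ≠ em₂ v₁ v₂ e₂ := by
  induction e₂ using Sym2.ind with
  | _ x y =>
    intro heq
    have hx : iot v₁ v₂ x ∈ em₁ (v₂ := v₂) e₁ := by
      rw [heq, em₂_pair]; simp
    have hy : iot v₁ v₂ y ∈ em₁ (v₂ := v₂) e₁ := by
      rw [heq, em₂_pair]; simp [Sym2.mem_iff]
    obtain ⟨a, _, ha⟩ := Sym2.mem_map.1 hx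
    obtain ⟨b, _, hb⟩ := Sym2.mem_map.1 hy
    have hxv : x = v₂ := ((iot_eq_inl v₁ v₂).1 ha.symm).1
    have hyv : y = v₂ := ((iot_eq_inl v₁ v₂).1 hb.symm).1
    rcases h with h | h
    · have he₁ : e₁ = s(v₁, v₁) := by
        apply em₁_injective (v₂ := v₂)
        rw [heq, em₁_pair, em₂_pair, hxv, hyv, iot_v₂]
      exact h (he₁ ▸ Sym2.mk_isDiag_iff.2 rfl)
    · exact h (Sym2.mk_isDiag_iff.2 (hxv.trans hyv.symm))

variable (H₁ : SimpleGraph V₁) (H₂ : SimpleGraph V₂)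

lemma em₁_mem_edgeSet {e : Sym2 V₁} :
    em₁ (v₂ := v₂) e ∈ (glueAt H₁ H₂ v₁ v₂).edgeSet ↔ e ∈ H₁.edgeSet := by
  induction e using Sym2.ind with
  | _ a b => rw [em₁_pair]; exact Iff.rfl

lemma em₂_mem_edgeSet {e : Sym2 V₂} :
    em₂ v₁ v₂ e ∈ (glueAt H₁ H₂ v₁ v₂).edgeSet ↔ e ∈ H₂.edgeSet := by
  induction e using Sym2.ind with
  | _ x y =>
    rw [em₂_pair]
    unfold iot
    split_ifs with h1 h2 h2 <;> subst_vars <;>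
      simp [SimpleGraph.mem_edgeSet, glueAt, SimpleGraph.adj_comm]

lemma edge_cases {e : Sym2 (V₁ ⊕ {x : V₂ // x ≠ v₂})}
    (he : e ∈ (glueAt H₁ H₂ v₁ v₂).edgeSet) :
    (∃ e₁, e = em₁ (v₂ := v₂) e₁) ∨ (∃ e₂, e = em₂ v₁ v₂ e₂) := by
  induction e using Sym2.ind with
  | _ w₁ w₂ =>
    rw [SimpleGraph.mem_edgeSet] at he
    match w₁, w₂, he with
    | Sum.inl a, Sum.inl b, _ => exact Or.inl ⟨s(a, b), by rw [em₁_pair]⟩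
    | Sum.inl a, Sum.inr y, he =>
      refine Or.inr ⟨s(v₂, y.1), ?_⟩
      rw [em₂_pair, iot_v₂, (iot_eq_inr v₁ v₂).2 rfl, he.1]
    | Sum.inr x, Sum.inl b, he =>
      refine Or.inr ⟨s(x.1, v₂), ?_⟩
      rw [em₂_pair, iot_v₂, (iot_eq_inr v₁ v₂).2 rfl, he.1]
    | Sum.inr x, Sum.inr y, _ =>
      exact Or.inr ⟨s(x.1, y.1), by
        rw [em₂_pair, (iot_eq_inr v₁ v₂).2 rfl, (iot_eq_inr v₁ v₂).2 rfl]⟩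

lemma common_em₁ {e f : Sym2 V₁} {w : V₁ ⊕ {x : V₂ // x ≠ v₂}}
    (he : w ∈ em₁ (v₂ := v₂) e) (hf : w ∈ em₁ (v₂ := v₂) f) : ∃ a, a ∈ e ∧ a ∈ f := by
  obtain ⟨a, ha, rfl⟩ := Sym2.mem_map.1 he
  obtain ⟨b, hb, hba⟩ := Sym2.mem_map.1 hf
  rw [Sum.inl.injEq] at hba
  exact ⟨a, ha, hba ▸ hb⟩

lemma common_em₂ {e f : Sym2 V₂} {w : V₁ ⊕ {x : V₂ // x ≠ v₂}}
    (he : w ∈ em₂ v₁ v₂ e) (hf : w ∈ em₂ v₁ v₂ f) : ∃ y, y ∈ e ∧ y ∈ f := by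
  obtain ⟨a, ha, rfl⟩ := Sym2.mem_map.1 he
  obtain ⟨b, hb, hba⟩ := Sym2.mem_map.1 hf
  exact ⟨a, ha, iot_injective v₁ v₂ hba ▸ hb⟩

lemma common_em₁_em₂ {e : Sym2 V₁} {f : Sym2 V₂} {w : V₁ ⊕ {x : V₂ // x ≠ v₂}}
    (he : w ∈ em₁ (v₂ := v₂) e) (hf : w ∈ em₂ v₁ v₂ f) : v₁ ∈ e ∧ v₂ ∈ f := by
  obtain ⟨a, ha, rfl⟩ := Sym2.mem_map.1 he
  obtain ⟨b, hb, hba⟩ := Sym2.mem_map.1 hf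
  obtain ⟨rfl, rfl⟩ := (iot_eq_inl v₁ v₂).1 hba
  exact ⟨ha, hb⟩

noncomputable def proj₁ (M : Finset (Sym2 (V₁ ⊕ {x : V₂ // x ≠ v₂}))) : Finset (Sym2 V₁) :=
  M.preimage (em₁ (v₂ := v₂)) ((em₁_injective (v₂ := v₂)).injOn)

noncomputable def proj₂ (M : Finset (Sym2 (V₁ ⊕ {x : V₂ // x ≠ v₂}))) : Finset (Sym2 V₂) :=
  M.preimage (em₂ v₁ v₂) ((em₂_injective v₁ v₂).injOn)

@[simp] lemma mem_proj₁ {M : Finset (Sym2 (V₁ ⊕ {x : V₂ // x ≠ v₂}))} {e : Sym2 V₁} :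
    e ∈ proj₁ v₂ M ↔ em₁ (v₂ := v₂) e ∈ M := Finset.mem_preimage

@[simp] lemma mem_proj₂ {M : Finset (Sym2 (V₁ ⊕ {x : V₂ // x ≠ v₂}))} {e : Sym2 V₂} :
    e ∈ proj₂ v₁ v₂ M ↔ em₂ v₁ v₂ e ∈ M := Finset.mem_preimage

noncomputable def glueM (M₁ : Finset (Sym2 V₁)) (M₂ : Finset (Sym2 V₂)) :
    Finset (Sym2 (V₁ ⊕ {x : V₂ // x ≠ v₂})) :=
  M₁.image (em₁ (v₂ := v₂)) ∪ M₂.image (em₂ v₁ v₂)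

lemma mem_glueM {M₁ : Finset (Sym2 V₁)} {M₂ : Finset (Sym2 V₂)}
    {e : Sym2 (V₁ ⊕ {x : V₂ // x ≠ v₂})} :
    e ∈ glueM v₁ v₂ M₁ M₂ ↔
      (∃ e₁ ∈ M₁, e = em₁ (v₂ := v₂) e₁) ∨ (∃ e₂ ∈ M₂, e = em₂ v₁ v₂ e₂) := by
  simp [glueM, eq_comm]

lemma nondiag_of_matching {V : Type*} [Fintype V] [DecidableEq V] {G : SimpleGraph V}
    {M : Finset (Sym2 V)} (h : IsMatchingSet G M) {e : Sym2 V} (he : e ∈ M) : ¬ e.IsDiag :=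
  G.not_isDiag_of_mem_edgeSet (h.1 he)

lemma proj₁_isMatching {M : Finset (Sym2 (V₁ ⊕ {x : V₂ // x ≠ v₂}))}
    (hM : IsMatchingSet (glueAt H₁ H₂ v₁ v₂) M) : IsMatchingSet H₁ (proj₁ v₂ M) := by
  constructor
  · intro e he
    rw [Finset.mem_coe, mem_proj₁] at he
    exact (em₁_mem_edgeSet v₁ v₂ H₁ H₂).1 (hM.1 he)
  · intro e he f hf hef a hae haf
    rw [mem_proj₁] at he hf
    exact hM.2 _ he _ hf (fun h => hef (em₁_injective (v₂ := v₂) h)) (Sum.inl a)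
      ((inl_mem_em₁ (v₂ := v₂)).2 hae) ((inl_mem_em₁ (v₂ := v₂)).2 haf)

lemma proj₂_isMatching {M : Finset (Sym2 (V₁ ⊕ {x : V₂ // x ≠ v₂}))}
    (hM : IsMatchingSet (glueAt H₁ H₂ v₁ v₂) M) : IsMatchingSet H₂ (proj₂ v₁ v₂ M) := by
  constructor
  · intro e he
    rw [Finset.mem_coe, mem_proj₂] at he
    exact (em₂_mem_edgeSet v₁ v₂ H₁ H₂).1 (hM.1 he)
  · intro e he f hf hef y hye hyf
    rw [mem_proj₂] at he hf
    refine hM.2 _ he _ hf (fun h => hef (em₂_injective v₁ v₂ h)) (iot v₁ v₂ y)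
      (Sym2.mem_map.2 ⟨y, hye, rfl⟩) (Sym2.mem_map.2 ⟨y, hyf, rfl⟩)

lemma glueM_proj {M : Finset (Sym2 (V₁ ⊕ {x : V₂ // x ≠ v₂}))}
    (hM : IsMatchingSet (glueAt H₁ H₂ v₁ v₂) M) :
    glueM v₁ v₂ (proj₁ v₂ M) (proj₂ v₁ v₂ M) = M := by
  ext e
  rw [mem_glueM]
  constructor
  · rintro (⟨e₁, h₁, rfl⟩ | ⟨e₂, h₂, rfl⟩)
    · exact (mem_proj₁ v₂).1 h₁
    · exact (mem_proj₂ v₁ v₂).1 h₂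
  · intro he
    rcases edge_cases v₁ v₂ H₁ H₂ (hM.1 he) with ⟨e₁, rfl⟩ | ⟨e₂, rfl⟩
    · exact Or.inl ⟨e₁, (mem_proj₁ v₂).2 he, rfl⟩
    · exact Or.inr ⟨e₂, (mem_proj₂ v₁ v₂).2 he, rfl⟩

lemma card_glueM {M₁ : Finset (Sym2 V₁)} {M₂ : Finset (Sym2 V₂)}
    (h₂ : ∀ e ∈ M₂, ¬ Sym2.IsDiag e) :
    (glueM v₁ v₂ M₁ M₂).card = M₁.card + M₂.card := by
  have hdisj : Disjoint (M₁.image (em₁ (v₂ := v₂))) (M₂.image (em₂ v₁ v₂)) := by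
    rw [Finset.disjoint_left]
    rintro e he hf
    obtain ⟨e₁, _, rfl⟩ := Finset.mem_image.1 he
    obtain ⟨e₂, he₂, heq⟩ := Finset.mem_image.1 hf
    exact em₁_ne_em₂ v₁ v₂ (Or.inr (h₂ e₂ he₂)) heq.symm
  rw [glueM, Finset.card_union_of_disjoint hdisj,
    Finset.card_image_of_injective _ (em₁_injective (v₂ := v₂)),
    Finset.card_image_of_injective _ (em₂_injective v₁ v₂)]

lemma proj₁_glueM {M₁ : Finset (Sym2 V₁)} {M₂ : Finset (Sym2 V₂)}
    (h₂ : ∀ e ∈ M₂, ¬ Sym2.IsDiag e) : proj₁ v₂ (glueM v₁ v₂ M₁ M₂) = M₁ := by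
  ext e
  rw [mem_proj₁, mem_glueM]
  constructor
  · rintro (⟨e₁, h₁, heq⟩ | ⟨e₂, h₂', heq⟩)
    · exact (em₁_injective (v₂ := v₂) heq) ▸ h₁
    · exact absurd heq (em₁_ne_em₂ v₁ v₂ (Or.inr (h₂ e₂ h₂')))
  · intro h; exact Or.inl ⟨e, h, rfl⟩

lemma proj₂_glueM {M₁ : Finset (Sym2 V₁)} {M₂ : Finset (Sym2 V₂)}
    (h₁ : ∀ e ∈ M₁, ¬ Sym2.IsDiag e) (h₂ : ∀ e ∈ M₂, ¬ Sym2.IsDiag e) :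
    proj₂ v₁ v₂ (glueM v₁ v₂ M₁ M₂) = M₂ := by
  ext e
  rw [mem_proj₂, mem_glueM]
  constructor
  · rintro (⟨e₁, h₁', heq⟩ | ⟨e₂, h₂', heq⟩)
    · exact absurd heq.symm (em₁_ne_em₂ v₁ v₂ (Or.inl (h₁ e₁ h₁')))
    · exact (em₂_injective v₁ v₂ heq).symm ▸ h₂'
  · intro h; exact Or.inr ⟨e, h, rfl⟩

lemma glueM_isMatching {M₁ : Finset (Sym2 V₁)} {M₂ : Finset (Sym2 V₂)}
    (h₁ : IsMatchingSet H₁ M₁) (h₂ : IsMatchingSet H₂ M₂)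
    (hcompat : (∀ e ∈ M₁, v₁ ∉ e) ∨ (∀ e ∈ M₂, v₂ ∉ e)) :
    IsMatchingSet (glueAt H₁ H₂ v₁ v₂) (glueM v₁ v₂ M₁ M₂) := by
  constructor
  · intro e he
    rw [Finset.mem_coe, mem_glueM] at he
    rcases he with ⟨e₁, h, rfl⟩ | ⟨e₂, h, rfl⟩
    · exact (em₁_mem_edgeSet v₁ v₂ H₁ H₂).2 (h₁.1 h)
    · exact (em₂_mem_edgeSet v₁ v₂ H₁ H₂).2 (h₂.1 h)
  · intro e he f hf hef w hwe hwf
    rw [mem_glueM] at he hf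
    rcases he with ⟨e₁, he₁, rfl⟩ | ⟨e₂, he₂, rfl⟩ <;>
      rcases hf with ⟨f₁, hf₁, rfl⟩ | ⟨f₂, hf₂, rfl⟩
    · obtain ⟨a, ha, ha'⟩ := common_em₁ (v₂ := v₂) hwe hwf
      exact h₁.2 _ he₁ _ hf₁ (fun h => hef (h ▸ rfl)) a ha ha'
    · obtain ⟨hv₁, hv₂⟩ := common_em₁_em₂ v₁ v₂ hwe hwf
      rcases hcompat with hc | hc
      · exact hc _ he₁ hv₁
      · exact hc _ hf₂ hv₂
    · obtain ⟨hv₁, hv₂⟩ := common_em₁_em₂ v₁ v₂ hwf hwe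
      rcases hcompat with hc | hc
      · exact hc _ hf₁ hv₁
      · exact hc _ he₂ hv₂
    · obtain ⟨y, hy, hy'⟩ := common_em₂ v₁ v₂ hwe hwf
      exact h₂.2 _ he₂ _ hf₂ (fun h => hef (h ▸ rfl)) y hy hy'

lemma not_both_covered {M : Finset (Sym2 (V₁ ⊕ {x : V₂ // x ≠ v₂}))}
    (hM : IsMatchingSet (glueAt H₁ H₂ v₁ v₂) M)
    {e₁ : Sym2 V₁} (he₁ : e₁ ∈ proj₁ v₂ M) (hv₁ : v₁ ∈ e₁)
    {e₂ : Sym2 V₂} (he₂ : e₂ ∈ proj₂ v₁ v₂ M) (hv₂ : v₂ ∈ e₂) : False := by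
  rw [mem_proj₁] at he₁
  rw [mem_proj₂] at he₂
  have hd : ¬ Sym2.IsDiag e₂ :=
    H₂.not_isDiag_of_mem_edgeSet ((em₂_mem_edgeSet v₁ v₂ H₁ H₂).1 (hM.1 he₂))
  exact hM.2 _ he₁ _ he₂ (em₁_ne_em₂ v₁ v₂ (Or.inr hd)) (Sum.inl v₁)
    ((inl_mem_em₁ (v₂ := v₂)).2 hv₁) ((inl_mem_em₂ v₁ v₂).2 ⟨rfl, hv₂⟩)

lemma eq_of_matchDel_eq {V : Type*} {M N : Finset (Sym2 V)} {v : V}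
    (h : matchDel M v = matchDel N v) (hN : ∀ e ∈ N, v ∉ e) (hc : M.card ≤ N.card) : M = N := by
  have hsub : N ⊆ M := by
    intro e he
    have h1 : e ∈ matchDel N v := ⟨he, hN e he⟩
    rw [← h] at h1
    exact h1.1
  exact (Finset.eq_of_subset_of_card_le hsub hc).symm

lemma matchDel_split {M N : Finset (Sym2 (V₁ ⊕ {x : V₂ // x ≠ v₂}))}
    (hM : IsMatchingSet (glueAt H₁ H₂ v₁ v₂) M) (hN : IsMatchingSet (glueAt H₁ H₂ v₁ v₂) N)
    (w : V₁ ⊕ {x : V₂ // x ≠ v₂}) :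
    matchDel M w = matchDel N w ↔
      ({e : Sym2 V₁ | e ∈ proj₁ v₂ M ∧ w ∉ em₁ (v₂ := v₂) e} =
        {e : Sym2 V₁ | e ∈ proj₁ v₂ N ∧ w ∉ em₁ (v₂ := v₂) e}) ∧
      ({e : Sym2 V₂ | e ∈ proj₂ v₁ v₂ M ∧ w ∉ em₂ v₁ v₂ e} =
        {e : Sym2 V₂ | e ∈ proj₂ v₁ v₂ N ∧ w ∉ em₂ v₁ v₂ e}) := by
  have fwd₁ : ∀ P Q : Finset (Sym2 (V₁ ⊕ {x : V₂ // x ≠ v₂})), matchDel P w = matchDel Q w →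
      {e : Sym2 V₁ | e ∈ proj₁ v₂ P ∧ w ∉ em₁ (v₂ := v₂) e} ⊆
        {e : Sym2 V₁ | e ∈ proj₁ v₂ Q ∧ w ∉ em₁ (v₂ := v₂) e} := by
    intro P Q h e₁ he
    obtain ⟨heP, hw⟩ := he
    have hm : em₁ (v₂ := v₂) e₁ ∈ matchDel Q w := by
      rw [← h]; exact ⟨(mem_proj₁ v₂).1 heP, hw⟩
    exact ⟨(mem_proj₁ v₂).2 hm.1, hm.2⟩
  have fwd₂ : ∀ P Q : Finset (Sym2 (V₁ ⊕ {x : V₂ // x ≠ v₂})), matchDel P w = matchDel Q w →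
      {e : Sym2 V₂ | e ∈ proj₂ v₁ v₂ P ∧ w ∉ em₂ v₁ v₂ e} ⊆
        {e : Sym2 V₂ | e ∈ proj₂ v₁ v₂ Q ∧ w ∉ em₂ v₁ v₂ e} := by
    intro P Q h e₂ he
    obtain ⟨heP, hw⟩ := he
    have hm : em₂ v₁ v₂ e₂ ∈ matchDel Q w := by
      rw [← h]; exact ⟨(mem_proj₂ v₁ v₂).1 heP, hw⟩
    exact ⟨(mem_proj₂ v₁ v₂).2 hm.1, hm.2⟩
  constructor
  · intro h
    exact ⟨Set.Subset.antisymm (fwd₁ _ _ h) (fwd₁ _ _ h.symm),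
      Set.Subset.antisymm (fwd₂ _ _ h) (fwd₂ _ _ h.symm)⟩
  · rintro ⟨h₁, h₂⟩
    have bwd : ∀ P Q : Finset (Sym2 (V₁ ⊕ {x : V₂ // x ≠ v₂})),
        IsMatchingSet (glueAt H₁ H₂ v₁ v₂) P →
        ({e : Sym2 V₁ | e ∈ proj₁ v₂ P ∧ w ∉ em₁ (v₂ := v₂) e} ⊆
          {e : Sym2 V₁ | e ∈ proj₁ v₂ Q ∧ w ∉ em₁ (v₂ := v₂) e}) →
        ({e : Sym2 V₂ | e ∈ proj₂ v₁ v₂ P ∧ w ∉ em₂ v₁ v₂ e} ⊆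
          {e : Sym2 V₂ | e ∈ proj₂ v₁ v₂ Q ∧ w ∉ em₂ v₁ v₂ e}) →
        matchDel P w ⊆ matchDel Q w := by
      intro P Q hP hs₁ hs₂ e he
      obtain ⟨heP, hw⟩ := he
      rcases edge_cases v₁ v₂ H₁ H₂ (hP.1 heP) with ⟨e₁, rfl⟩ | ⟨e₂, rfl⟩
      · have h3 : e₁ ∈ {e : Sym2 V₁ | e ∈ proj₁ v₂ Q ∧ w ∉ em₁ (v₂ := v₂) e} :=
          hs₁ ⟨(mem_proj₁ v₂).2 heP, hw⟩
        exact ⟨(mem_proj₁ v₂).1 h3.1, h3.2⟩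
      · have h3 : e₂ ∈ {e : Sym2 V₂ | e ∈ proj₂ v₁ v₂ Q ∧ w ∉ em₂ v₁ v₂ e} :=
          hs₂ ⟨(mem_proj₂ v₁ v₂).2 heP, hw⟩
        exact ⟨(mem_proj₂ v₁ v₂).1 h3.1, h3.2⟩
    exact Set.Subset.antisymm (bwd M N hM h₁.subset h₂.subset)
      (bwd N M hN h₁.symm.subset h₂.symm.subset)

lemma setc₁_inl (P : Finset (Sym2 V₁)) (a : V₁) :
    {e : Sym2 V₁ | e ∈ P ∧ (Sum.inl a : V₁ ⊕ {x : V₂ // x ≠ v₂}) ∉ em₁ (v₂ := v₂) e} =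
      matchDel P a := by
  ext e; simp only [Set.mem_setOf_eq, matchDel, inl_mem_em₁]

lemma setc₁_inr (P : Finset (Sym2 V₁)) (x : {x : V₂ // x ≠ v₂}) :
    {e : Sym2 V₁ | e ∈ P ∧ (Sum.inr x : V₁ ⊕ {x : V₂ // x ≠ v₂}) ∉ em₁ (v₂ := v₂) e} =
      ↑P := by
  ext e; simp only [Set.mem_setOf_eq, Finset.mem_coe, and_iff_left_iff_imp]
  exact fun _ => inr_not_mem_em₁ (v₂ := v₂)

lemma setc₂_inl_v₁ (P : Finset (Sym2 V₂)) :
    {e : Sym2 V₂ | e ∈ P ∧ (Sum.inl v₁ : V₁ ⊕ {x : V₂ // x ≠ v₂}) ∉ em₂ v₁ v₂ e} =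
      matchDel P v₂ := by
  ext e; simp only [Set.mem_setOf_eq, matchDel, inl_mem_em₂, true_and]

lemma setc₂_inl (P : Finset (Sym2 V₂)) {a : V₁} (ha : a ≠ v₁) :
    {e : Sym2 V₂ | e ∈ P ∧ (Sum.inl a : V₁ ⊕ {x : V₂ // x ≠ v₂}) ∉ em₂ v₁ v₂ e} =
      ↑P := by
  ext e
  simp only [Set.mem_setOf_eq, Finset.mem_coe, inl_mem_em₂, and_iff_left_iff_imp]
  exact fun _ h => ha h.1

lemma setc₂_inr (P : Finset (Sym2 V₂)) (x : {x : V₂ // x ≠ v₂}) :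
    {e : Sym2 V₂ | e ∈ P ∧ (Sum.inr x : V₁ ⊕ {x : V₂ // x ≠ v₂}) ∉ em₂ v₁ v₂ e} =
      matchDel P x.1 := by
  ext e; simp only [Set.mem_setOf_eq, matchDel, inr_mem_em₂]

lemma matchDel_inlv₁_iff {M N : Finset (Sym2 (V₁ ⊕ {x : V₂ // x ≠ v₂}))}
    (hM : IsMatchingSet (glueAt H₁ H₂ v₁ v₂) M) (hN : IsMatchingSet (glueAt H₁ H₂ v₁ v₂) N) :
    matchDel M (Sum.inl v₁) = matchDel N (Sum.inl v₁) ↔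
      matchDel (proj₁ v₂ M) v₁ = matchDel (proj₁ v₂ N) v₁ ∧
      matchDel (proj₂ v₁ v₂ M) v₂ = matchDel (proj₂ v₁ v₂ N) v₂ := by
  rw [matchDel_split v₁ v₂ H₁ H₂ hM hN, setc₁_inl, setc₁_inl, setc₂_inl_v₁, setc₂_inl_v₁]

lemma matchDel_inl_iff {M N : Finset (Sym2 (V₁ ⊕ {x : V₂ // x ≠ v₂}))}
    (hM : IsMatchingSet (glueAt H₁ H₂ v₁ v₂) M) (hN : IsMatchingSet (glueAt H₁ H₂ v₁ v₂) N)
    {a : V₁} (ha : a ≠ v₁) :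
    matchDel M (Sum.inl a) = matchDel N (Sum.inl a) ↔
      matchDel (proj₁ v₂ M) a = matchDel (proj₁ v₂ N) a ∧
      proj₂ v₁ v₂ M = proj₂ v₁ v₂ N := by
  rw [matchDel_split v₁ v₂ H₁ H₂ hM hN, setc₁_inl, setc₁_inl, setc₂_inl v₁ v₂ _ ha,
    setc₂_inl v₁ v₂ _ ha, Finset.coe_inj]

lemma matchDel_inr_iff {M N : Finset (Sym2 (V₁ ⊕ {x : V₂ // x ≠ v₂}))}
    (hM : IsMatchingSet (glueAt H₁ H₂ v₁ v₂) M) (hN : IsMatchingSet (glueAt H₁ H₂ v₁ v₂) N)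
    (x : {x : V₂ // x ≠ v₂}) :
    matchDel M (Sum.inr x) = matchDel N (Sum.inr x) ↔
      proj₁ v₂ M = proj₁ v₂ N ∧
      matchDel (proj₂ v₁ v₂ M) x.1 = matchDel (proj₂ v₁ v₂ N) x.1 := by
  rw [matchDel_split v₁ v₂ H₁ H₂ hM hN, setc₁_inr, setc₁_inr, setc₂_inr, setc₂_inr,
    Finset.coe_inj]

end glue

/-- **Gluing near-perfect matching graphs.** For `i = 1, 2`, let `Hᵢ` be a
graph of odd order `2kᵢ + 1` with a uniquely unmatched vertex `vᵢ`, and let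
`M_{vᵢ}` be the unique near-perfect matching of `Hᵢ` leaving `vᵢ` unmatched.
Then the near-perfect matching graph of `(H₁ ⊔ H₂)/(v₁ ∼ v₂)` is isomorphic to
`(M_{k₁}(H₁) ⊔ M_{k₂}(H₂))/(M_{v₁} ∼ M_{v₂})`. -/
theorem glue_nearPerfect_matchingGraph
    {V₁ V₂ : Type*} [Fintype V₁] [DecidableEq V₁] [Fintype V₂] [DecidableEq V₂]
    (H₁ : SimpleGraph V₁) (H₂ : SimpleGraph V₂) (v₁ : V₁) (v₂ : V₂) (k₁ k₂ : ℕ)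
    (hV₁ : Fintype.card V₁ = 2 * k₁ + 1) (hV₂ : Fintype.card V₂ = 2 * k₂ + 1)
    (Mv₁ : Finset (Sym2 V₁)) (hMv₁ : IsMatchingSet H₁ Mv₁) (hc₁ : Mv₁.card = k₁)
    (hun₁ : ∀ e ∈ Mv₁, v₁ ∉ e)
    (huniq₁ : ∀ M : Finset (Sym2 V₁), IsMatchingSet H₁ M → M.card = k₁ →
      (∀ e ∈ M, v₁ ∉ e) → M = Mv₁)
    (Mv₂ : Finset (Sym2 V₂)) (hMv₂ : IsMatchingSet H₂ Mv₂) (hc₂ : Mv₂.card = k₂)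
    (hun₂ : ∀ e ∈ Mv₂, v₂ ∉ e)
    (huniq₂ : ∀ M : Finset (Sym2 V₂), IsMatchingSet H₂ M → M.card = k₂ →
      (∀ e ∈ M, v₂ ∉ e) → M = Mv₂) :
    Nonempty
      (matchingGraph (glueAt H₁ H₂ v₁ v₂) (k₁ + k₂) ≃g
        glueAt (matchingGraph H₁ k₁) (matchingGraph H₂ k₂)
          ⟨Mv₁, hMv₁, hc₁.ge⟩ ⟨Mv₂, hMv₂, hc₂.ge⟩) := by
  classical
  set G := glueAt H₁ H₂ v₁ v₂ with hG
  have hnd₁ : ∀ {P : Finset (Sym2 V₁)}, IsMatchingSet H₁ P → ∀ e ∈ P, ¬ e.IsDiag :=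
    fun hP e he => H₁.not_isDiag_of_mem_edgeSet (hP.1 he)
  have hnd₂ : ∀ {P : Finset (Sym2 V₂)}, IsMatchingSet H₂ P → ∀ e ∈ P, ¬ e.IsDiag :=
    fun hP e he => H₂.not_isDiag_of_mem_edgeSet (hP.1 he)
  have hcards : ∀ M : Finset (Sym2 (V₁ ⊕ {x : V₂ // x ≠ v₂})), IsMatchingSet G M →
      k₁ + k₂ ≤ M.card → (proj₁ v₂ M).card = k₁ ∧ (proj₂ v₁ v₂ M).card = k₂ := by
    intro M hM hk
    have h1 := matching_two_mul_card_le (proj₁_isMatching v₁ v₂ H₁ H₂ hM)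
    have h2 := matching_two_mul_card_le (proj₂_isMatching v₁ v₂ H₁ H₂ hM)
    rw [hV₁] at h1
    rw [hV₂] at h2
    have h3 : M.card = (proj₁ v₂ M).card + (proj₂ v₁ v₂ M).card := by
      conv_lhs => rw [← glueM_proj v₁ v₂ H₁ H₂ hM]
      exact card_glueM v₁ v₂ (hnd₂ (proj₂_isMatching v₁ v₂ H₁ H₂ hM))
    omega
  have eq_of_proj : ∀ M N : Finset (Sym2 (V₁ ⊕ {x : V₂ // x ≠ v₂})),
      IsMatchingSet G M → IsMatchingSet G N →
      proj₁ v₂ M = proj₁ v₂ N → proj₂ v₁ v₂ M = proj₂ v₁ v₂ N → M = N := by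
    intro M N hM hN h1 h2
    rw [← glueM_proj v₁ v₂ H₁ H₂ hM, ← glueM_proj v₁ v₂ H₁ H₂ hN, h1, h2]
  have hdich : ∀ M : Finset (Sym2 (V₁ ⊕ {x : V₂ // x ≠ v₂})), IsMatchingSet G M →
      k₁ + k₂ ≤ M.card →
      (proj₂ v₁ v₂ M = Mv₂ ∨ (proj₁ v₂ M = Mv₁ ∧ proj₂ v₁ v₂ M ≠ Mv₂)) := by
    intro M hM hk
    by_cases hcov : ∀ e ∈ proj₂ v₁ v₂ M, v₂ ∉ e
    · exact Or.inl (huniq₂ _ (proj₂_isMatching v₁ v₂ H₁ H₂ hM) (hcards M hM hk).2 hcov)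
    · push_neg at hcov
      obtain ⟨e₂, he₂, hv⟩ := hcov
      refine Or.inr ⟨?_, ?_⟩
      · refine huniq₁ _ (proj₁_isMatching v₁ v₂ H₁ H₂ hM) (hcards M hM hk).1 ?_
        intro e₁ h₁ hv₁
        exact not_both_covered v₁ v₂ H₁ H₂ hM h₁ hv₁ he₂ hv
      · intro hEq
        rw [hEq] at he₂
        exact hun₂ e₂ he₂ hv
  -- the three key adjacency equivalences, at the level of finsets
  have keyAA : ∀ M N : Finset (Sym2 (V₁ ⊕ {x : V₂ // x ≠ v₂})),
      IsMatchingSet G M → k₁ + k₂ ≤ M.card → IsMatchingSet G N → k₁ + k₂ ≤ N.card →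
      proj₂ v₁ v₂ M = Mv₂ → proj₂ v₁ v₂ N = Mv₂ →
      ((proj₁ v₂ M ≠ proj₁ v₂ N ∧
          ∃ a, matchDel (proj₁ v₂ M) a = matchDel (proj₁ v₂ N) a) ↔
        (M ≠ N ∧ ∃ w, matchDel M w = matchDel N w)) := by
    intro M N hM hkM hN hkN hm hn
    constructor
    · rintro ⟨hne, a, ha⟩
      refine ⟨fun h => hne (by rw [h]), ?_⟩
      by_cases hav : a = v₁
      · refine ⟨Sum.inl v₁, (matchDel_inlv₁_iff v₁ v₂ H₁ H₂ hM hN).2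
          ⟨by rw [← hav]; exact ha, by rw [hm, hn]⟩⟩
      · exact ⟨Sum.inl a,
          (matchDel_inl_iff v₁ v₂ H₁ H₂ hM hN hav).2 ⟨ha, hm.trans hn.symm⟩⟩
    · rintro ⟨hne, w, hw⟩
      refine ⟨fun h => hne (eq_of_proj M N hM hN h (hm.trans hn.symm)), ?_⟩
      rcases w with a | x
      · by_cases hav : a = v₁
        · rw [hav] at hw
          exact ⟨v₁, ((matchDel_inlv₁_iff v₁ v₂ H₁ H₂ hM hN).1 hw).1⟩
        · exact ⟨a, ((matchDel_inl_iff v₁ v₂ H₁ H₂ hM hN hav).1 hw).1⟩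
      · exfalso
        have h3 := (matchDel_inr_iff v₁ v₂ H₁ H₂ hM hN x).1 hw
        exact hne (eq_of_proj M N hM hN h3.1 (hm.trans hn.symm))
  have keyAB : ∀ M N : Finset (Sym2 (V₁ ⊕ {x : V₂ // x ≠ v₂})),
      IsMatchingSet G M → k₁ + k₂ ≤ M.card → IsMatchingSet G N → k₁ + k₂ ≤ N.card →
      proj₂ v₁ v₂ M = Mv₂ → proj₂ v₁ v₂ N ≠ Mv₂ →
      ((proj₁ v₂ M = Mv₁ ∧ (Mv₂ ≠ proj₂ v₁ v₂ N ∧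
          ∃ y, matchDel Mv₂ y = matchDel (proj₂ v₁ v₂ N) y)) ↔
        (M ≠ N ∧ ∃ w, matchDel M w = matchDel N w)) := by
    intro M N hM hkM hN hkN hm hn
    have hn1 : proj₁ v₂ N = Mv₁ := ((hdich N hN hkN).resolve_left hn).1
    constructor
    · rintro ⟨pm1, _, y, hy⟩
      rw [← hm] at hy
      refine ⟨fun h => hn (h ▸ hm), ?_⟩
      by_cases hyv : y = v₂
      · rw [hyv] at hy
        exact ⟨Sum.inl v₁, (matchDel_inlv₁_iff v₁ v₂ H₁ H₂ hM hN).2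
          ⟨by rw [pm1, hn1], hy⟩⟩
      · exact ⟨Sum.inr ⟨y, hyv⟩, (matchDel_inr_iff v₁ v₂ H₁ H₂ hM hN ⟨y, hyv⟩).2
          ⟨pm1.trans hn1.symm, hy⟩⟩
    · rintro ⟨hne, w, hw⟩
      have hne2 : Mv₂ ≠ proj₂ v₁ v₂ N := fun h => hn h.symm
      rcases w with a | x
      · by_cases hav : a = v₁
        · rw [hav] at hw
          obtain ⟨h1, h2⟩ := (matchDel_inlv₁_iff v₁ v₂ H₁ H₂ hM hN).1 hw
          rw [hn1] at h1
          have pm1 : proj₁ v₂ M = Mv₁ :=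
            eq_of_matchDel_eq h1 hun₁ (by rw [hc₁, (hcards M hM hkM).1])
          exact ⟨pm1, hne2, v₂, by rw [← hm]; exact h2⟩
        · exfalso
          obtain ⟨_, h2⟩ := (matchDel_inl_iff v₁ v₂ H₁ H₂ hM hN hav).1 hw
          exact hn (h2 ▸ hm)
      · obtain ⟨h1, h2⟩ := (matchDel_inr_iff v₁ v₂ H₁ H₂ hM hN x).1 hw
        exact ⟨h1.trans hn1, hne2, x.1, by rw [← hm]; exact h2⟩
  have keyBB : ∀ M N : Finset (Sym2 (V₁ ⊕ {x : V₂ // x ≠ v₂})),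
      IsMatchingSet G M → k₁ + k₂ ≤ M.card → IsMatchingSet G N → k₁ + k₂ ≤ N.card →
      proj₂ v₁ v₂ M ≠ Mv₂ → proj₂ v₁ v₂ N ≠ Mv₂ →
      ((proj₂ v₁ v₂ M ≠ proj₂ v₁ v₂ N ∧
          ∃ y, matchDel (proj₂ v₁ v₂ M) y = matchDel (proj₂ v₁ v₂ N) y) ↔
        (M ≠ N ∧ ∃ w, matchDel M w = matchDel N w)) := by
    intro M N hM hkM hN hkN hm hn
    have pm1 : proj₁ v₂ M = Mv₁ := ((hdich M hM hkM).resolve_left hm).1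
    have pn1 : proj₁ v₂ N = Mv₁ := ((hdich N hN hkN).resolve_left hn).1
    constructor
    · rintro ⟨hne, y, hy⟩
      refine ⟨fun h => hne (by rw [h]), ?_⟩
      by_cases hyv : y = v₂
      · rw [hyv] at hy
        exact ⟨Sum.inl v₁, (matchDel_inlv₁_iff v₁ v₂ H₁ H₂ hM hN).2
          ⟨by rw [pm1, pn1], hy⟩⟩
      · exact ⟨Sum.inr ⟨y, hyv⟩, (matchDel_inr_iff v₁ v₂ H₁ H₂ hM hN ⟨y, hyv⟩).2
          ⟨pm1.trans pn1.symm, hy⟩⟩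
    · rintro ⟨hne, w, hw⟩
      refine ⟨fun h => hne (eq_of_proj M N hM hN (pm1.trans pn1.symm) h), ?_⟩
      rcases w with a | x
      · by_cases hav : a = v₁
        · rw [hav] at hw
          exact ⟨v₂, ((matchDel_inlv₁_iff v₁ v₂ H₁ H₂ hM hN).1 hw).2⟩
        · exfalso
          obtain ⟨_, h2⟩ := (matchDel_inl_iff v₁ v₂ H₁ H₂ hM hN hav).1 hw
          exact hne (eq_of_proj M N hM hN (pm1.trans pn1.symm) h2)
      · exact ⟨x.1, ((matchDel_inr_iff v₁ v₂ H₁ H₂ hM hN x).1 hw).2⟩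
  -- construct the isomorphism
  refine ⟨⟨⟨
    fun M => if h : proj₂ v₁ v₂ M.1 = Mv₂ then
        Sum.inl ⟨proj₁ v₂ M.1, proj₁_isMatching v₁ v₂ H₁ H₂ M.2.1,
          (hcards M.1 M.2.1 M.2.2).1.ge⟩
      else
        Sum.inr ⟨⟨proj₂ v₁ v₂ M.1, proj₂_isMatching v₁ v₂ H₁ H₂ M.2.1,
          (hcards M.1 M.2.1 M.2.2).2.ge⟩, fun hc => h (congrArg Subtype.val hc)⟩,
    fun Q => Q.elim
      (fun M₁ => ⟨glueM v₁ v₂ M₁.1 Mv₂,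
        glueM_isMatching v₁ v₂ H₁ H₂ M₁.2.1 hMv₂ (Or.inr hun₂), by
          rw [card_glueM v₁ v₂ (hnd₂ hMv₂), hc₂]
          exact Nat.add_le_add_right M₁.2.2 k₂⟩)
      (fun M₂ => ⟨glueM v₁ v₂ Mv₁ M₂.1.1,
        glueM_isMatching v₁ v₂ H₁ H₂ hMv₁ M₂.1.2.1 (Or.inl hun₁), by
          rw [card_glueM v₁ v₂ (hnd₂ M₂.1.2.1), hc₁]
          exact Nat.add_le_add_left M₂.1.2.2 k₁⟩),
    ?_, ?_⟩, ?_⟩⟩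
  · -- left inverse
    rintro ⟨M, hM, hk⟩
    by_cases h : proj₂ v₁ v₂ M = Mv₂
    · simp only [dif_pos h]
      apply Subtype.ext
      show glueM v₁ v₂ (proj₁ v₂ M) Mv₂ = M
      rw [← h]
      exact glueM_proj v₁ v₂ H₁ H₂ hM
    · simp only [dif_neg h]
      apply Subtype.ext
      show glueM v₁ v₂ Mv₁ (proj₂ v₁ v₂ M) = M
      rw [← ((hdich M hM hk).resolve_left h).1]
      exact glueM_proj v₁ v₂ H₁ H₂ hM
  · -- right inverse
    rintro (M₁ | M₂)
    · have hp2 : proj₂ v₁ v₂ (glueM v₁ v₂ M₁.1 Mv₂) = Mv₂ :=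
        proj₂_glueM v₁ v₂ (hnd₁ M₁.2.1) (hnd₂ hMv₂)
      simp only [Sum.elim_inl, dif_pos hp2]
      erw [dif_pos hp2]
      congr 1
      exact Subtype.ext (proj₁_glueM v₁ v₂ (hnd₂ hMv₂))
    · have hp2 : proj₂ v₁ v₂ (glueM v₁ v₂ Mv₁ M₂.1.1) = M₂.1.1 :=
        proj₂_glueM v₁ v₂ (hnd₁ hMv₁) (hnd₂ M₂.1.2.1)
      have hne : ¬ proj₂ v₁ v₂ (glueM v₁ v₂ Mv₁ M₂.1.1) = Mv₂ := by
        rw [hp2]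
        exact fun h => M₂.2 (Subtype.ext h)
      simp only [Sum.elim_inr, dif_neg hne]
      erw [dif_neg hne]
      congr 1
      apply Subtype.ext
      apply Subtype.ext
      exact hp2
  · -- map_rel_iff
    rintro ⟨M, hM, hkM⟩ ⟨N, hN, hkN⟩
    by_cases hm : proj₂ v₁ v₂ M = Mv₂ <;> by_cases hn : proj₂ v₁ v₂ N = Mv₂
    · simp only [Equiv.coe_fn_mk, dif_pos hm, dif_pos hn]
      show (matchingGraph H₁ k₁).Adj _ _ ↔ (matchingGraph (glueAt H₁ H₂ v₁ v₂) (k₁ + k₂)).Adj _ _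
      show (_ ≠ _ ∧ ∃ a, matchDel (proj₁ v₂ M) a = matchDel (proj₁ v₂ N) a) ↔
        (_ ≠ _ ∧ ∃ w, matchDel M w = matchDel N w)
      rw [ne_eq, Subtype.mk.injEq, ne_eq, Subtype.mk.injEq]
      exact keyAA M N hM hkM hN hkN hm hn
    · simp only [Equiv.coe_fn_mk, dif_pos hm, dif_neg hn]
      have key := keyAB M N hM hkM hN hkN hm hn
      constructor
      · rintro ⟨hx, hne2, y, hy⟩
        obtain ⟨h1, h2⟩ := key.1
          ⟨congrArg Subtype.val hx, fun h => hne2 (Subtype.ext h), y, hy⟩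
        exact ⟨fun h => h1 (congrArg Subtype.val h), h2⟩
      · rintro ⟨hne, w, hw⟩
        obtain ⟨h1, hne2, y, hy⟩ := key.2 ⟨fun h => hne (Subtype.ext h), w, hw⟩
        exact ⟨Subtype.ext h1, fun h => hne2 (congrArg Subtype.val h), y, hy⟩
    · simp only [Equiv.coe_fn_mk, dif_neg hm, dif_pos hn]
      have key := keyAB N M hN hkN hM hkM hn hm
      constructor
      · rintro ⟨hx, hne2, y, hy⟩
        obtain ⟨h1, h2⟩ := key.1
          ⟨congrArg Subtype.val hx, fun h => hne2 (Subtype.ext h), y, hy⟩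
        obtain ⟨w, hw⟩ := h2
        exact ⟨fun h => h1 (congrArg Subtype.val h).symm, w, hw.symm⟩
      · rintro ⟨hne, w, hw⟩
        obtain ⟨h1, hne2, y, hy⟩ := key.2 ⟨fun h => hne (Subtype.ext h.symm), w, hw.symm⟩
        exact ⟨Subtype.ext h1, fun h => hne2 (congrArg Subtype.val h), y, hy⟩
    · simp only [Equiv.coe_fn_mk, dif_neg hm, dif_neg hn]
      have key := keyBB M N hM hkM hN hkN hm hn
      constructor
      · rintro ⟨hne2, y, hy⟩
        obtain ⟨h1, h2⟩ := key.1 ⟨fun h => hne2 (Subtype.ext h), y, hy⟩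
        exact ⟨fun h => h1 (congrArg Subtype.val h), h2⟩
      · rintro ⟨hne, w, hw⟩
        obtain ⟨h1, y, hy⟩ := key.2 ⟨fun h => hne (Subtype.ext h), w, hw⟩
        exact ⟨fun h => h1 (congrArg Subtype.val h), y, hy⟩
end

section
/- Let T be a tree of order n ≥ 2 and let T_s be the tree of order 2n − 1 obtained from T by subdividing each edge exactly once. Then B_n(T̄_s) is isomorphic to T, where T̄_s is the complement of T_s. In particular, every tree is isomorphic to a Bell coloring graph. -/
open SimpleGraph

variable {V : Type*} [Fintype V] [DecidableEq V]

/-- The subdivision of a graph `T`: every edge `uv` is replaced by a new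
vertex (the edge itself) joined to `u` and to `v`. -/
def subdivide {W : Type*} (T : SimpleGraph W) : SimpleGraph (W ⊕ T.edgeSet) where
  Adj x y :=
    match x, y with
    | Sum.inl v, Sum.inr e => v ∈ e.1
    | Sum.inr e, Sum.inl v => v ∈ e.1
    | _, _ => False
  symm := by
    constructor
    rintro (a | a) (b | b) h
    · exact h.elim
    · exact h
    · exact h
    · exact h.elim
  loopless := by
    constructor
    rintro (a | a) h
    · exact h.elim
    · exact h.elim

set_option linter.unusedSectionVars false
open Finset
namespace TreeBell
variable {T : SimpleGraph V}




noncomputable def tpath (hT : T.IsTree) (u v : V) : T.Walk u v :=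
  (hT.existsUnique_path u v).exists.choose

lemma tpath_isPath (hT : T.IsTree) (u v : V) : (tpath hT u v).IsPath :=
  (hT.existsUnique_path u v).exists.choose_spec

lemma tpath_unique (hT : T.IsTree) {u v : V} (p : T.Walk u v) (hp : p.IsPath) :
    p = tpath hT u v :=
  (hT.existsUnique_path u v).unique hp (tpath_isPath hT u v)

noncomputable def par (hT : T.IsTree) (r v : V) : V := (tpath hT v r).getVert 1

lemma tpath_not_nil (hT : T.IsTree) {r v : V} (h : v ≠ r) : ¬ (tpath hT v r).Nil :=
  Walk.not_nil_of_ne h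

lemma adj_par (hT : T.IsTree) {r v : V} (h : v ≠ r) : T.Adj v (par hT r v) :=
  Walk.adj_snd (tpath_not_nil hT h)

lemma par_ne (hT : T.IsTree) {r v : V} (h : v ≠ r) : par hT r v ≠ v :=
  (adj_par hT h).ne'

lemma tail_eq (hT : T.IsTree) {r v : V} (h : v ≠ r) :
    (tpath hT v r).tail = tpath hT (par hT r v) r :=
  tpath_unique hT _ ((tpath_isPath hT v r).tail)

lemma len_par (hT : T.IsTree) {r v : V} (h : v ≠ r) :
    (tpath hT (par hT r v) r).length + 1 = (tpath hT v r).length := by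
  rw [← tail_eq hT h]; exact Walk.length_tail_add_one (tpath_not_nil hT h)

lemma par_of_adj (hT : T.IsTree) {u v : V} (h : T.Adj v u) : par hT u v = u := by
  have h1 : (Walk.cons h Walk.nil) = tpath hT v u :=
    tpath_unique hT _ (by simp [h.ne])
  unfold par; rw [← h1]; rfl

lemma par_antisym (hT : T.IsTree) {r a b : V} (ha : a ≠ r) (hb : b ≠ r)
    (h1 : par hT r a = b) (h2 : par hT r b = a) : False := by
  have l1 := len_par hT ha
  have l2 := len_par hT hb
  rw [h1] at l1; rw [h2] at l2; omega

lemma tpath_nil (hT : T.IsTree) (v : V) : tpath hT v v = Walk.nil :=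
  (tpath_unique hT Walk.nil (by simp)).symm

lemma getVert_one_append {a b c : V} (p : T.Walk a b) (q : T.Walk b c)
    (h : p.length ≠ 0) : (p.append q).getVert 1 = p.getVert 1 := by
  rw [Walk.getVert_append]
  rcases lt_or_ge 1 p.length with h1 | h1
  · simp [h1]
  · have h1 : p.length = 1 := by omega
    have h2 := p.getVert_length
    rw [h1] at h2
    rw [if_neg (by omega), h1]
    simp [h2]

lemma length_ne_zero {a b : V} (p : T.Walk a b) (h : a ≠ b) : p.length ≠ 0 :=
  fun h0 => h (Walk.eq_of_length_eq_zero h0)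

/-- L4: for an edge `ab` with `b ≠ r`, either `b`'s parent is `a` or `a`'s parent is `b`. -/
lemma adj_par_cases (hT : T.IsTree) {r a b : V} (hadj : T.Adj a b) (hb : b ≠ r) :
    par hT r b = a ∨ (a ≠ r ∧ par hT r a = b) := by
  by_cases hp : (Walk.cons hadj.symm (tpath hT a r)).IsPath
  · left
    have := tpath_unique hT _ hp
    unfold par; rw [← this]; exact Walk.snd_cons _ _
  · right
    rw [Walk.cons_isPath_iff] at hp
    push_neg at hp
    have hbs : b ∈ (tpath hT a r).support := hp (tpath_isPath hT a r)
    have har : a ≠ r := by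
      rintro rfl
      rw [tpath_nil hT a] at hbs
      simp at hbs
      exact hb hbs
    refine ⟨har, ?_⟩
    have htk : (Walk.cons hadj Walk.nil) = (tpath hT a r).takeUntil b hbs :=
      (hT.existsUnique_path a b).unique (by simp [hadj.ne])
        ((tpath_isPath hT a r).takeUntil hbs)
    have hspec := (tpath hT a r).take_spec hbs
    rw [← htk] at hspec
    unfold par
    rw [← hspec]
    simp [Walk.cons_append]

lemma isPath_concat {a b c : V} (p : T.Walk a b) (hp : p.IsPath) (h : T.Adj b c)
    (hc : c ∉ p.support) : (p.append (Walk.cons h Walk.nil)).IsPath := by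
  induction p with
  | nil => simpa using h.ne
  | @cons x y z h' q ih =>
    rw [Walk.cons_isPath_iff] at hp
    simp only [Walk.support_cons, List.mem_cons] at hc
    push_neg at hc
    rw [Walk.cons_append, Walk.cons_isPath_iff]
    refine ⟨ih hp.1 h hc.2, ?_⟩
    rw [Walk.support_append]
    simp only [List.mem_append]
    rintro (hx | hx)
    · exact hp.2 hx
    · simp at hx
      exact hc.1 hx.symm

/-- L6: if `u ~ v` then for `w ∉ {u,v}`, the parent of `w` toward `u` equals toward `v`. -/
lemma par_eq_par (hT : T.IsTree) {u v w : V} (hadj : T.Adj u v) (hwu : w ≠ u) (hwv : w ≠ v) :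
    par hT u w = par hT v w := by
  by_cases hu : u ∈ (tpath hT w v).support
  · -- path w→v goes through u
    have htk := tpath_unique hT _ ((tpath_isPath hT w v).takeUntil hu)
    have hspec := (tpath hT w v).take_spec hu
    unfold par
    rw [← hspec, getVert_one_append _ _ (by
      rw [htk]; exact length_ne_zero _ hwu), htk]
  · have hq : ((tpath hT w v).append (Walk.cons hadj.symm Walk.nil)).IsPath :=
      isPath_concat _ (tpath_isPath hT w v) hadj.symm hu
    have := tpath_unique hT _ hq
    unfold par
    rw [← this, getVert_one_append _ _ (length_ne_zero _ hwv)]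


variable [DecidableRel T.Adj]

/-- the second element of the part of `v`: the parent edge, or `inl v` itself if `v = r`. -/
noncomputable def evx (hT : T.IsTree) (r v : V) : V ⊕ T.edgeSet :=
  if h : T.Adj v (par hT r v) then Sum.inr ⟨s(v, par hT r v), (T.mem_edgeSet).2 h⟩
  else Sum.inl v

noncomputable def pairPart (hT : T.IsTree) (r v : V) : Finset (V ⊕ T.edgeSet) :=
  {Sum.inl v, evx hT r v}

/-- the stable partition associated to a root `r`. -/
noncomputable def phi (hT : T.IsTree) (r : V) : Multiset (Finset (V ⊕ T.edgeSet)) :=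
  {Sum.inl r} ::ₘ (univ.erase r).val.map (pairPart hT r)

lemma evx_eq (hT : T.IsTree) {r v : V} (h : v ≠ r) :
    evx hT r v = Sum.inr ⟨s(v, par hT r v), (T.mem_edgeSet).2 (adj_par hT h)⟩ :=
  dif_pos (adj_par hT h)

lemma pairPart_eq (hT : T.IsTree) {r v : V} (h : v ≠ r) :
    pairPart hT r v =
      {Sum.inl v, Sum.inr ⟨s(v, par hT r v), (T.mem_edgeSet).2 (adj_par hT h)⟩} := by
  rw [pairPart, evx_eq hT h]

lemma mem_pairPart_iff (hT : T.IsTree) {r v : V} (h : v ≠ r) (x : V ⊕ T.edgeSet) :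
    x ∈ pairPart hT r v ↔ x = Sum.inl v ∨
      x = Sum.inr ⟨s(v, par hT r v), (T.mem_edgeSet).2 (adj_par hT h)⟩ := by
  rw [pairPart_eq hT h]; simp

lemma sum_map_pair {α β : Type*} (m : Multiset α) (f g : α → β) :
    (m.map (fun v => (f v ::ₘ {g v} : Multiset β))).sum = m.map f + m.map g := by
  induction m using Multiset.induction with
  | empty => simp
  | cons a m ih =>
    simp only [Multiset.map_cons, Multiset.sum_cons, ih]
    rw [Multiset.cons_add, Multiset.singleton_add, Multiset.cons_add, Multiset.add_cons]

lemma evx_injOn (hT : T.IsTree) {r a b : V} (ha : a ≠ r) (hb : b ≠ r)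
    (h : evx hT r a = evx hT r b) : a = b := by
  rw [evx_eq hT ha, evx_eq hT hb] at h
  simp only [Sum.inr.injEq, Subtype.mk_eq_mk, Sym2.eq_iff] at h
  rcases h with ⟨rfl, -⟩ | ⟨h1, h2⟩
  · rfl
  · exact (par_antisym hT ha hb h2 h1.symm).elim

lemma card_edgeSet (hT : T.IsTree) : Fintype.card T.edgeSet = Fintype.card V - 1 := by
  have h := hT.card_edgeFinset
  rw [edgeFinset, Set.toFinset_card] at h
  omega

lemma evx_map_eq (hT : T.IsTree) (r : V) :
    (univ.erase r).val.map (evx hT r) =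
      (univ : Finset T.edgeSet).val.map (fun e => (Sum.inr e : V ⊕ T.edgeSet)) := by
  have hnd : ((univ.erase r).val.map (evx hT r)).Nodup := by
    refine Multiset.Nodup.map_on ?_ (univ.erase r).nodup
    intro a ha b hb h
    exact evx_injOn hT (Finset.ne_of_mem_erase ha) (Finset.ne_of_mem_erase hb) h
  apply Multiset.eq_of_le_of_card_le
  · rw [Multiset.le_iff_subset hnd]
    intro x hx
    rw [Multiset.mem_map] at hx ⊢
    obtain ⟨a, ha, rfl⟩ := hx
    rw [evx_eq hT (Finset.ne_of_mem_erase (by exact ha))]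
    exact ⟨_, Finset.mem_univ _, rfl⟩
  · simp only [Multiset.card_map]
    rw [← Finset.card_def, ← Finset.card_def, Finset.card_univ,
      Finset.card_erase_of_mem (mem_univ r), Finset.card_univ, card_edgeSet hT]
lemma phi_card (hT : T.IsTree) (r : V) : Multiset.card (phi hT r) = Fintype.card V := by
  have hpos : 0 < Fintype.card V := Fintype.card_pos_iff.2 ⟨r⟩
  rw [phi, Multiset.card_cons, Multiset.card_map]
  have : (univ.erase r).val.card = (univ.erase r).card := rfl
  rw [this, Finset.card_erase_of_mem (mem_univ r), Finset.card_univ]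
  omega

lemma phi_sum (hT : T.IsTree) (r : V) :
    ((phi hT r).map Finset.val).sum = (univ : Finset (V ⊕ T.edgeSet)).val := by
  rw [phi, Multiset.map_cons, Multiset.sum_cons, Multiset.map_map]
  have h1 : ((univ.erase r).val.map (Finset.val ∘ pairPart hT r)) =
      (univ.erase r).val.map
        (fun v => (Sum.inl v ::ₘ {evx hT r v} : Multiset (V ⊕ T.edgeSet))) := by
    apply Multiset.map_congr rfl
    intro v hv
    have hvr : v ≠ r := Finset.ne_of_mem_erase hv
    simp only [Function.comp_apply, pairPart]
    rw [Finset.insert_val_of_notMem (by rw [evx_eq hT hvr]; simp)]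
    rfl
  rw [h1, sum_map_pair, evx_map_eq hT r]
  have h2 : (univ : Finset (V ⊕ T.edgeSet)).val =
      (univ : Finset V).val.map Sum.inl + (univ : Finset T.edgeSet).val.map Sum.inr := by
    rw [← Finset.univ_disjSum_univ, Finset.val_disjSum]; rfl
  have h3 : (univ : Finset V).val.map (Sum.inl : V → V ⊕ T.edgeSet)
      = Sum.inl r ::ₘ (univ.erase r).val.map (Sum.inl : V → V ⊕ T.edgeSet) := by
    rw [← Multiset.map_cons]
    congr 1
    rw [Finset.erase_val, Multiset.cons_erase (Finset.mem_val.mpr (mem_univ r))]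
  rw [h2, h3]
  have h4 : ({Sum.inl r} : Finset (V ⊕ T.edgeSet)).val
      = ({Sum.inl r} : Multiset (V ⊕ T.edgeSet)) := rfl
  rw [h4, Multiset.singleton_add, Multiset.cons_add]

lemma phi_indep (hT : T.IsTree) (r : V) :
    ∀ s ∈ phi hT r, ∀ a ∈ s, ∀ b ∈ s, ¬ (subdivide T)ᶜ.Adj a b := by
  intro s hs a ha b hb
  rw [SimpleGraph.compl_adj]
  rintro ⟨hne, hnadj⟩
  apply hnadj
  rw [phi, Multiset.mem_cons] at hs
  rcases hs with rfl | hs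
  · simp only [Finset.mem_singleton] at ha hb
    subst ha; subst hb; exact (hne rfl).elim
  · rw [Multiset.mem_map] at hs
    obtain ⟨v, hv, rfl⟩ := hs
    have hvr := Finset.ne_of_mem_erase hv
    rw [mem_pairPart_iff hT hvr] at ha hb
    rcases ha with rfl | rfl <;> rcases hb with rfl | rfl
    · exact (hne rfl).elim
    · show v ∈ s(v, par hT r v)
      simp
    · show v ∈ s(v, par hT r v)
      simp
    · exact (hne rfl).elim

lemma phi_stable (hT : T.IsTree) (r : V) :
    IsStablePartition (subdivide T)ᶜ (Fintype.card V) (phi hT r) :=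
  ⟨phi_card hT r, phi_sum hT r, phi_indep hT r⟩
section PartUniq
variable {α : Type*} [Fintype α] [DecidableEq α] {P : Multiset (Finset α)}

lemma exists_part (hsum : (P.map Finset.val).sum = (univ : Finset α).val) (x : α) :
    ∃ s ∈ P, x ∈ s := by
  have hx : x ∈ (P.map Finset.val).sum := by
    rw [hsum]; exact Finset.mem_def.1 (mem_univ x)
  rw [show (P.map Finset.val).sum = (P.map Finset.val).join from rfl,
    Multiset.mem_join] at hx
  obtain ⟨s, hs, hxs⟩ := hx
  rw [Multiset.mem_map] at hs
  obtain ⟨t, ht, rfl⟩ := hs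
  exact ⟨t, ht, hxs⟩

lemma count_parts (hsum : (P.map Finset.val).sum = (univ : Finset α).val) (x : α) :
    ((P.map fun s => s.val.count x).sum) = 1 := by
  have h := congrArg (Multiset.count x) hsum
  rw [Multiset.count_sum] at h
  rwa [Multiset.count_eq_one_of_mem univ.nodup (Finset.mem_def.1 (mem_univ x))] at h

lemma uniq_part (hsum : (P.map Finset.val).sum = (univ : Finset α).val)
    {x : α} {s t : Finset α} (hs : s ∈ P) (ht : t ∈ P) (hxs : x ∈ s) (hxt : x ∈ t) :
    s = t := by
  by_contra hne
  have h1 := count_parts hsum x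
  obtain ⟨P', rfl⟩ : ∃ P', P = s ::ₘ P' := ⟨P.erase s, (Multiset.cons_erase hs).symm⟩
  have ht' : t ∈ P' := by
    rcases Multiset.mem_cons.1 ht with rfl | h
    · exact (hne rfl).elim
    · exact h
  obtain ⟨P'', rfl⟩ : ∃ P'', P' = t ::ₘ P'' := ⟨P'.erase t, (Multiset.cons_erase ht').symm⟩
  rw [Multiset.map_cons, Multiset.map_cons, Multiset.sum_cons, Multiset.sum_cons] at h1
  have hcs : 1 ≤ s.val.count x := Multiset.one_le_count_iff_mem.2 (Finset.mem_def.1 hxs)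
  have hct : 1 ≤ t.val.count x := Multiset.one_le_count_iff_mem.2 (Finset.mem_def.1 hxt)
  omega

lemma filter_sum' (p : α → Prop) [DecidablePred p] (S : Multiset (Multiset α)) :
    S.sum.filter p = (S.map (Multiset.filter p)).sum := by
  induction S using Multiset.induction with
  | empty => simp
  | cons a s ih => simp [Multiset.filter_add, ih]

lemma sum_card_filter (hsum : (P.map Finset.val).sum = (univ : Finset α).val)
    (p : α → Prop) [DecidablePred p] :
    (P.map fun s => (s.filter p).card).sum = (univ.filter p : Finset α).card := by
  have h := congrArg (fun m => Multiset.card (Multiset.filter p m)) hsum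
  simp only [filter_sum' p] at h
  rw [show ((P.map Finset.val).map (Multiset.filter p)).sum
      = ((P.map Finset.val).map (Multiset.filter p)).join from rfl, Multiset.card_join] at h
  simp only [Multiset.map_map, Function.comp] at h
  exact h

lemma all_one {m : Multiset ℕ} (h1 : ∀ x ∈ m, x ≤ 1) (h2 : m.sum = Multiset.card m) :
    ∀ x ∈ m, x = 1 := by
  induction m using Multiset.induction with
  | empty => simp
  | cons a s ih =>
    have hs : s.sum ≤ Multiset.card s * 1 := by
      have := Multiset.sum_le_card_nsmul s 1 (fun x hx => h1 x (Multiset.mem_cons_of_mem hx))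
      simpa using this
    rw [Multiset.sum_cons, Multiset.card_cons] at h2
    have ha : a ≤ 1 := h1 a (Multiset.mem_cons_self a s)
    have ha1 : a = 1 ∧ s.sum = Multiset.card s := by omega
    intro x hx
    rcases Multiset.mem_cons.1 hx with rfl | hx
    · exact ha1.1
    · exact ih (fun y hy => h1 y (Multiset.mem_cons_of_mem hy)) ha1.2 x hx

end PartUniq
section Classify
variable {k : ℕ} {P : Multiset (Finset (V ⊕ T.edgeSet))}

lemma part_clique (hP : IsStablePartition (subdivide T)ᶜ k P) {s : Finset (V ⊕ T.edgeSet)}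
    (hs : s ∈ P) {a b : V ⊕ T.edgeSet} (ha : a ∈ s) (hb : b ∈ s) (hne : a ≠ b) :
    (subdivide T).Adj a b := by
  have h := hP.2.2 s hs a ha b hb
  rw [SimpleGraph.compl_adj] at h
  push_neg at h
  exact h hne

lemma inl_unique (hP : IsStablePartition (subdivide T)ᶜ k P) {s : Finset (V ⊕ T.edgeSet)}
    (hs : s ∈ P) {v w : V} (hv : Sum.inl v ∈ s) (hw : Sum.inl w ∈ s) : v = w := by
  by_contra hne
  exact part_clique hP hs hv hw (fun hh => hne (Sum.inl_injective hh))

lemma inr_unique (hP : IsStablePartition (subdivide T)ᶜ k P) {s : Finset (V ⊕ T.edgeSet)}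
    (hs : s ∈ P) {e f : T.edgeSet} (he : Sum.inr e ∈ s) (hf : Sum.inr f ∈ s) : e = f := by
  by_contra hne
  exact part_clique hP hs he hf (fun hh => hne (Sum.inr_injective hh))

lemma inl_inr_mem (hP : IsStablePartition (subdivide T)ᶜ k P) {s : Finset (V ⊕ T.edgeSet)}
    (hs : s ∈ P) {v : V} {e : T.edgeSet} (hv : Sum.inl v ∈ s) (he : Sum.inr e ∈ s) :
    v ∈ (e : Sym2 V) := by
  have h := part_clique hP hs hv he (fun hh => Sum.inl_ne_inr hh)
  exact h

lemma card_filter_isLeft {β : Type*} [Fintype β] [DecidableEq β] :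
    ((univ : Finset (V ⊕ β)).filter (fun x => x.isLeft)).card = Fintype.card V := by
  have h : (univ : Finset (V ⊕ β)).filter (fun x => x.isLeft)
      = univ.map ⟨Sum.inl, Sum.inl_injective⟩ := by
    ext x
    simp only [Finset.mem_filter, mem_univ, true_and, Finset.mem_map,
      Function.Embedding.coeFn_mk, Sum.isLeft_iff]
    exact ⟨fun ⟨y, hy⟩ => ⟨y, hy.symm⟩, fun ⟨y, hy⟩ => ⟨y, hy.symm⟩⟩
  rw [h, Finset.card_map, Finset.card_univ]

/-- every part of a stable `n`-partition contains exactly one `inl`. -/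
lemma one_inl (hP : IsStablePartition (subdivide T)ᶜ (Fintype.card V) P)
    {s : Finset (V ⊕ T.edgeSet)} (hs : s ∈ P) :
    ∃ v : V, Sum.inl v ∈ s ∧ ∀ w : V, Sum.inl w ∈ s → w = v := by
  have hsum := hP.2.1
  have hle : ∀ t ∈ P, (t.filter (fun x => x.isLeft)).card ≤ 1 := by
    intro t ht
    refine Finset.card_le_one.2 ?_
    intro a ha b hb
    rw [Finset.mem_filter] at ha hb
    obtain ⟨va, rfl⟩ := Sum.isLeft_iff.1 ha.2
    obtain ⟨vb, rfl⟩ := Sum.isLeft_iff.1 hb.2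
    rw [inl_unique hP ht ha.1 hb.1]
  have htot : (P.map fun t => (t.filter (fun x => x.isLeft)).card).sum = Fintype.card V := by
    rw [sum_card_filter hsum, card_filter_isLeft]
  have hone : ∀ t ∈ P, (t.filter (fun x => x.isLeft)).card = 1 := by
    intro t ht
    have := all_one (m := P.map fun t => (t.filter (fun x => x.isLeft)).card) ?_ ?_
      _ (Multiset.mem_map_of_mem _ ht)
    · exact this
    · intro x hx
      obtain ⟨t', ht', rfl⟩ := Multiset.mem_map.1 hx
      exact hle t' ht'
    · rw [htot, Multiset.card_map, hP.1]
  obtain ⟨a, ha⟩ := Finset.card_eq_one.1 (hone s hs)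
  have haf : a ∈ s.filter (fun x => x.isLeft) := ha ▸ Finset.mem_singleton_self a
  rw [Finset.mem_filter] at haf
  obtain ⟨v, rfl⟩ := Sum.isLeft_iff.1 haf.2
  refine ⟨v, haf.1, fun w hw => ?_⟩
  have : Sum.inl w ∈ s.filter (fun x => x.isLeft) := Finset.mem_filter.2 ⟨hw, rfl⟩
  rw [ha, Finset.mem_singleton] at this
  exact Sum.inl_injective this

lemma card_pairPart (hT : T.IsTree) {r v : V} (h : v ≠ r) : (pairPart hT r v).card = 2 := by
  rw [pairPart_eq hT h]
  rw [Finset.card_insert_of_notMem (by simp), Finset.card_singleton]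

lemma phi_nodup (hT : T.IsTree) (r : V) : (phi hT r).Nodup := by
  rw [phi, Multiset.nodup_cons]
  constructor
  · intro h
    obtain ⟨v, hv, heq⟩ := Multiset.mem_map.1 h
    have hvr : v ≠ r := Finset.ne_of_mem_erase hv
    have := card_pairPart hT hvr
    rw [heq] at this
    simp at this
  · refine Multiset.Nodup.map_on ?_ (univ.erase r).nodup
    intro a ha b hb hab
    have har : a ≠ r := Finset.ne_of_mem_erase ha
    have hbr : b ≠ r := Finset.ne_of_mem_erase hb
    have : Sum.inl a ∈ pairPart hT r b := by
      rw [← hab, mem_pairPart_iff hT har]; left; rfl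
    rw [mem_pairPart_iff hT hbr] at this
    rcases this with h | h
    · exact Sum.inl_injective h
    · exact absurd h (by simp)

lemma phi_inj (hT : T.IsTree) {r r' : V} (h : phi hT r = phi hT r') : r = r' := by
  have h1 : ({Sum.inl r} : Finset (V ⊕ T.edgeSet)) ∈ phi hT r' := by
    rw [← h, phi]; exact Multiset.mem_cons_self _ _
  rw [phi, Multiset.mem_cons] at h1
  rcases h1 with h1 | h1
  · have := Finset.singleton_injective h1
    exact Sum.inl_injective this
  · obtain ⟨v, hv, heq⟩ := Multiset.mem_map.1 h1
    have hvr : v ≠ r' := Finset.ne_of_mem_erase hv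
    have := card_pairPart hT hvr
    rw [heq] at this
    simp at this

/-- classification: every stable `n`-partition is `phi r` for some root `r`. -/
lemma phi_surj (hT : T.IsTree) (hP : IsStablePartition (subdivide T)ᶜ (Fintype.card V) P) :
    ∃ r, P = phi hT r := by
  classical
  have hsum := hP.2.1
  -- the part containing a given element
  have hpt : ∀ x : V ⊕ T.edgeSet, ∃ s, s ∈ P ∧ x ∈ s := by
    intro x; obtain ⟨s, hs, hx⟩ := exists_part hsum x; exact ⟨s, hs, hx⟩
  choose pt hptP hptx using hpt
  -- the unique inl of each part
  have hgex : ∀ e : T.edgeSet, ∃ v : V, Sum.inl v ∈ pt (Sum.inr e) ∧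
      ∀ w : V, Sum.inl w ∈ pt (Sum.inr e) → w = v := fun e => one_inl hP (hptP _)
  choose g hg1 hg2 using hgex
  have hge : ∀ e : T.edgeSet, g e ∈ (e : Sym2 V) :=
    fun e => inl_inr_mem hP (hptP (Sum.inr e)) (hg1 e) (hptx (Sum.inr e))
  have hginj : Function.Injective g := by
    intro e f hef
    have h1 : pt (Sum.inr e) = pt (Sum.inl (g e)) :=
      uniq_part hsum (hptP _) (hptP _) (hg1 e) (hptx _)
    have h2 : pt (Sum.inr f) = pt (Sum.inl (g e)) := by
      rw [hef]
      exact uniq_part hsum (hptP _) (hptP _) (hg1 f) (hptx _)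
    exact inr_unique hP (hptP (Sum.inr e)) (hptx (Sum.inr e))
      (by rw [h1, ← h2]; exact hptx (Sum.inr f))
  -- the root: the vertex not of the form g e
  have hcard : (univ.image g).card < Fintype.card V := by
    calc (univ.image g).card ≤ (univ : Finset T.edgeSet).card := Finset.card_image_le
    _ = Fintype.card T.edgeSet := Finset.card_univ
    _ < Fintype.card V := by
        rw [card_edgeSet hT]
        have hne : Nonempty V := hT.1.nonempty
        have : 0 < Fintype.card V := Fintype.card_pos
        omega
  obtain ⟨r, hr⟩ : ∃ r : V, r ∉ univ.image g := by
    by_contra hall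
    push_neg at hall
    have : univ.image g = univ := Finset.eq_univ_iff_forall.2 (fun v => hall v)
    rw [this, Finset.card_univ] at hcard
    exact lt_irrefl _ hcard
  have himg : univ.image g = univ.erase r := by
    apply Finset.eq_of_subset_of_card_le
    · intro x hx
      exact Finset.mem_erase.2 ⟨fun hxr => hr (hxr ▸ hx), mem_univ x⟩
    · rw [Finset.card_erase_of_mem (mem_univ r), Finset.card_univ,
        Finset.card_image_of_injective _ hginj, Finset.card_univ, card_edgeSet hT]
  have hpartr : pt (Sum.inl r) = {Sum.inl r} := by
    ext x
    simp only [Finset.mem_singleton]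
    constructor
    · intro hx
      match x with
      | Sum.inl w =>
        rw [inl_unique hP (hptP _) hx (hptx (Sum.inl r))]
      | Sum.inr f =>
        exfalso
        have heq : pt (Sum.inl r) = pt (Sum.inr f) :=
          uniq_part hsum (hptP _) (hptP _) hx (hptx _)
        have hgf : g f = r := by
          symm
          apply hg2 f r
          rw [← heq]; exact hptx (Sum.inl r)
        exact hr (hgf ▸ Finset.mem_image_of_mem g (mem_univ f))
    · rintro rfl; exact hptx _
  have hpartv : ∀ e : T.edgeSet, pt (Sum.inr e) = {Sum.inl (g e), Sum.inr e} := by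
    intro e
    ext x
    simp only [Finset.mem_insert, Finset.mem_singleton]
    constructor
    · intro hx
      match x with
      | Sum.inl w => exact Or.inl (by rw [inl_unique hP (hptP _) hx (hg1 e)])
      | Sum.inr f => exact Or.inr (by rw [inr_unique hP (hptP _) hx (hptx (Sum.inr e))])
    · rintro (rfl | rfl)
      · exact hg1 e
      · exact hptx _
  have key : ∀ m : ℕ, ∀ v : V, v ≠ r → Fintype.card V - (tpath hT v r).length ≤ m →
      ∀ e : T.edgeSet, g e = v → (e : Sym2 V) = s(v, par hT r v) := by
    intro m
    induction m with
    | zero =>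
      intro v hv hlen e hge'
      have := (tpath_isPath hT v r).length_lt
      omega
    | succ m ih =>
      intro v hv hlen e hge'
      have hmem : v ∈ (e : Sym2 V) := hge' ▸ hge e
      set w := Sym2.Mem.other' hmem with hw
      have hvw : s(v, w) = (e : Sym2 V) := Sym2.other_spec' hmem
      have hadj : T.Adj v w := (T.mem_edgeSet).1 (hvw ▸ e.2)
      rcases adj_par_cases hT hadj.symm hv with hc | ⟨hwr, hpw⟩
      · rw [hc]; exact hvw.symm
      · exfalso
        obtain ⟨e', -, hge''⟩ :=
          Finset.mem_image.1 (himg ▸ Finset.mem_erase.2 ⟨hwr, mem_univ w⟩)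
        have hne : e' ≠ e := fun h => hadj.ne (by rw [← hge', ← hge'', h])
        have hlw : (tpath hT w r).length = (tpath hT v r).length + 1 := by
          have := len_par hT hwr
          rw [hpw] at this
          omega
        have hkey := ih w hwr (by omega) e' hge''
        apply hne
        apply Subtype.ext
        rw [hkey, hpw, ← hvw, Sym2.eq_swap]
  have hphi : ∀ s ∈ phi hT r, s ∈ P := by
    intro s hs
    rw [phi, Multiset.mem_cons] at hs
    rcases hs with rfl | hs
    · rw [← hpartr]; exact hptP _
    · obtain ⟨v, hv, rfl⟩ := Multiset.mem_map.1 hs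
      have hvr : v ≠ r := Finset.ne_of_mem_erase hv
      obtain ⟨e, -, hge'⟩ :=
        Finset.mem_image.1 (himg ▸ Finset.mem_erase.2 ⟨hvr, mem_univ v⟩)
      have hkey := key (Fintype.card V) v hvr (by omega) e hge'
      have hee : e = ⟨s(v, par hT r v), (T.mem_edgeSet).2 (adj_par hT hvr)⟩ :=
        Subtype.ext hkey
      have hpp : pairPart hT r v = pt (Sum.inr e) := by
        rw [hpartv e, pairPart_eq hT hvr, hge', hee]
      rw [hpp]; exact hptP _
  refine ⟨r, ?_⟩
  symm
  apply Multiset.eq_of_le_of_card_le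
  · rw [Multiset.le_iff_subset (phi_nodup hT r)]
    exact fun s hs => hphi s hs
  · rw [hP.1, phi_card]

end Classify
section Adjacency

lemma pairPart_congr (hT : T.IsTree) {u v w : V} (huv : T.Adj u v)
    (hwu : w ≠ u) (hwv : w ≠ v) : pairPart hT u w = pairPart hT v w := by
  rw [pairPart_eq hT hwu, pairPart_eq hT hwv]
  have h : (⟨s(w, par hT u w), (T.mem_edgeSet).2 (adj_par hT hwu)⟩ : T.edgeSet)
      = ⟨s(w, par hT v w), (T.mem_edgeSet).2 (adj_par hT hwv)⟩ :=
    Subtype.ext (by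
      show s(w, par hT u w) = s(w, par hT v w)
      rw [par_eq_par hT huv hwu hwv])
  rw [h]

lemma eraseVtx_phi (hT : T.IsTree) {u v : V} (huv : T.Adj u v) (e : T.edgeSet)
    (he : (e : Sym2 V) = s(u, v)) :
    eraseVtx (phi hT u) (Sum.inr e) =
      {Sum.inl u} ::ₘ {Sum.inl v} ::ₘ ((univ.erase u).erase v).val.map (pairPart hT u) := by
  rw [phi, eraseVtx, Multiset.map_cons, Multiset.map_map]
  have hhead : ({Sum.inl u} : Finset (V ⊕ T.edgeSet)).erase (Sum.inr e) = {Sum.inl u} :=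
    Finset.erase_eq_of_notMem (by simp)
  rw [hhead]
  congr 1
  have hv : (univ.erase u).val = v ::ₘ ((univ.erase u).erase v).val := by
    rw [Finset.erase_val ((univ.erase u))]
    rw [Multiset.cons_erase (Finset.mem_def.1 (Finset.mem_erase.2 ⟨huv.ne', mem_univ v⟩))]
  rw [hv, Multiset.map_cons]
  congr 1
  · -- (pairPart hT u v).erase (inr e) = {inl v}
    have hev : (⟨s(v, par hT u v),
        (T.mem_edgeSet).2 (adj_par hT (huv.ne' : v ≠ u))⟩ : T.edgeSet) = e := by
      apply Subtype.ext
      show s(v, par hT u v) = (e : Sym2 V)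
      rw [par_of_adj hT huv.symm, he]
      exact Sym2.eq_swap
    simp only [Function.comp_apply]
    rw [pairPart_eq hT (huv.ne' : v ≠ u), hev]
    ext x
    simp only [Finset.mem_erase, Finset.mem_insert, Finset.mem_singleton]
    constructor
    · rintro ⟨h1, h2 | h2⟩
      · exact h2
      · exact absurd h2 h1
    · rintro rfl
      exact ⟨by simp, Or.inl rfl⟩
  · apply Multiset.map_congr rfl
    intro w hw
    rw [Finset.mem_val, Finset.mem_erase] at hw
    obtain ⟨hwv, hw2⟩ := hw
    have hwu : w ≠ u := Finset.ne_of_mem_erase hw2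
    simp only [Function.comp_apply]
    apply Finset.erase_eq_of_notMem
    rw [mem_pairPart_iff hT hwu]
    rintro (h1 | h1)
    · simp at h1
    · have h2 : s(u, v) = s(w, par hT u w) := by
        rw [← he]
        exact congrArg Subtype.val (Sum.inr_injective h1)
      rw [Sym2.eq_iff] at h2
      rcases h2 with ⟨rfl, -⟩ | ⟨-, rfl⟩
      · exact hwu rfl
      · exact hwv rfl

lemma phi_adj_of_adj (hT : T.IsTree) {u v : V} (huv : T.Adj u v) :
    ∃ x, eraseVtx (phi hT u) x = eraseVtx (phi hT v) x := by
  refine ⟨Sum.inr ⟨s(u, v), (T.mem_edgeSet).2 huv⟩, ?_⟩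
  rw [eraseVtx_phi hT huv _ rfl, eraseVtx_phi hT huv.symm _ Sym2.eq_swap]
  rw [Multiset.cons_swap]
  congr 1
  congr 1
  rw [Finset.erase_right_comm]
  apply Multiset.map_congr rfl
  intro w hw
  rw [Finset.mem_val, Finset.mem_erase] at hw
  obtain ⟨hwu, hw2⟩ := hw
  have hwv : w ≠ v := Finset.ne_of_mem_erase hw2
  exact pairPart_congr hT huv hwu hwv

lemma adj_of_phi_adj (hT : T.IsTree) {u v : V} (hne : u ≠ v) {x : V ⊕ T.edgeSet}
    (h : eraseVtx (phi hT u) x = eraseVtx (phi hT v) x) : T.Adj u v := by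
  by_contra hadj
  set w := par hT u v with hwdef
  have hvu : v ≠ u := hne.symm
  have hadjvw : T.Adj v w := adj_par hT hvu
  have hwu : w ≠ u := fun hwu' => hadj (hwu' ▸ hadjvw).symm
  have hwv : w ≠ v := par_ne hT hvu
  have hs1 : ({Sum.inl u} : Finset (V ⊕ T.edgeSet)) ∈ phi hT u := Multiset.mem_cons_self _ _
  have hs2 : pairPart hT u v ∈ phi hT u := by
    rw [phi]
    exact Multiset.mem_cons_of_mem (Multiset.mem_map_of_mem _
      (Finset.mem_def.1 (Finset.mem_erase.2 ⟨hvu, mem_univ v⟩)))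
  have hs3 : pairPart hT u w ∈ phi hT u := by
    rw [phi]
    exact Multiset.mem_cons_of_mem (Multiset.mem_map_of_mem _
      (Finset.mem_def.1 (Finset.mem_erase.2 ⟨hwu, mem_univ w⟩)))
  have hn1 : ({Sum.inl u} : Finset (V ⊕ T.edgeSet)) ∉ phi hT v := by
    rw [phi, Multiset.mem_cons]
    rintro (h1 | h1)
    · exact hne (Sum.inl_injective (Finset.singleton_injective h1))
    · obtain ⟨a, ha, heq⟩ := Multiset.mem_map.1 h1
      have := card_pairPart hT (Finset.ne_of_mem_erase (Finset.mem_def.2 ha))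
      rw [heq] at this; simp at this
  have hn2 : pairPart hT u v ∉ phi hT v := by
    rw [phi, Multiset.mem_cons]
    rintro (h1 | h1)
    · have := card_pairPart hT hvu; rw [h1] at this; simp at this
    · obtain ⟨a, ha, heq⟩ := Multiset.mem_map.1 h1
      have hav : a ≠ v := Finset.ne_of_mem_erase (Finset.mem_def.2 ha)
      have h2 : Sum.inl v ∈ pairPart hT v a := by
        rw [heq, mem_pairPart_iff hT hvu]; exact Or.inl rfl
      rw [mem_pairPart_iff hT hav] at h2
      rcases h2 with h2 | h2
      · exact hav (Sum.inl_injective h2).symm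
      · simp at h2
  have hn3 : pairPart hT u w ∉ phi hT v := by
    rw [phi, Multiset.mem_cons]
    rintro (h1 | h1)
    · have := card_pairPart hT hwu; rw [h1] at this; simp at this
    · obtain ⟨a, ha, heq⟩ := Multiset.mem_map.1 h1
      have hav : a ≠ v := Finset.ne_of_mem_erase (Finset.mem_def.2 ha)
      have h2 : Sum.inl w ∈ pairPart hT v a := by
        rw [heq, mem_pairPart_iff hT hwu]; exact Or.inl rfl
      rw [mem_pairPart_iff hT hav] at h2
      rcases h2 with h2 | h2
      swap
      · simp at h2
      have haw : a = w := (Sum.inl_injective h2).symm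
      rw [haw] at heq
      have h3 : Sum.inr (⟨s(w, par hT v w), (T.mem_edgeSet).2 (adj_par hT hwv)⟩ : T.edgeSet)
          ∈ pairPart hT u w := by
        rw [← heq, mem_pairPart_iff hT hwv]; exact Or.inr rfl
      rw [mem_pairPart_iff hT hwu] at h3
      rcases h3 with h3 | h3
      · simp at h3
      · have h4 : s(w, par hT v w) = s(w, par hT u w) :=
          congrArg Subtype.val (Sum.inr_injective h3)
        rw [Sym2.congr_right] at h4
        have h5 : par hT v w = v := par_of_adj hT hadjvw.symm
        exact par_antisym hT hvu hwu hwdef.symm (h4 ▸ h5)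
  have d12 : ({Sum.inl u} : Finset (V ⊕ T.edgeSet)) ≠ pairPart hT u v := by
    intro h'
    have := card_pairPart hT hvu; rw [← h'] at this; simp at this
  have d13 : ({Sum.inl u} : Finset (V ⊕ T.edgeSet)) ≠ pairPart hT u w := by
    intro h'
    have := card_pairPart hT hwu; rw [← h'] at this; simp at this
  have d23 : pairPart hT u v ≠ pairPart hT u w := by
    intro h'
    have h2 : Sum.inl v ∈ pairPart hT u w := by
      rw [← h', mem_pairPart_iff hT hvu]; exact Or.inl rfl
    rw [mem_pairPart_iff hT hwu] at h2
    rcases h2 with h2 | h2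
    · exact hwv (Sum.inl_injective h2).symm
    · simp at h2
  obtain ⟨A, hA, hAx⟩ := exists_part (phi_sum hT u) x
  obtain ⟨B, hB, hBx⟩ := exists_part (phi_sum hT v) x
  have hclass : ∀ s ∈ phi hT u, s ∉ phi hT v → s = A ∨ s = B.erase x := by
    intro s hs hns
    have h1 : s.erase x ∈ eraseVtx (phi hT v) x := by
      rw [← h, eraseVtx]
      exact Multiset.mem_map_of_mem _ hs
    rw [eraseVtx, Multiset.mem_map] at h1
    obtain ⟨t, ht, hte⟩ := h1
    by_cases hxs : x ∈ s
    · exact Or.inl (uniq_part (phi_sum hT u) hs hA hxs hAx)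
    · rw [Finset.erase_eq_of_notMem hxs] at hte
      by_cases hxt : x ∈ t
      · refine Or.inr ?_
        have h2 : t = B := uniq_part (phi_sum hT v) ht hB hxt hBx
        rw [← h2, hte]
      · rw [Finset.erase_eq_of_notMem hxt] at hte
        exact absurd (hte ▸ ht) hns
  rcases hclass _ hs1 hn1 with e1 | e1 <;> rcases hclass _ hs2 hn2 with e2 | e2 <;>
    rcases hclass _ hs3 hn3 with e3 | e3
  · exact d12 (e1.trans e2.symm)
  · exact d12 (e1.trans e2.symm)
  · exact d13 (e1.trans e3.symm)
  · exact d23 (e2.trans e3.symm)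
  · exact d23 (e2.trans e3.symm)
  · exact d13 (e1.trans e3.symm)
  · exact d12 (e1.trans e2.symm)
  · exact d12 (e1.trans e2.symm)

end Adjacency
end TreeBell

/-- **Trees are Bell coloring graphs.** If `T` is a tree of order `n ≥ 2` and
`T_s` is the tree obtained from `T` by subdividing every edge once, then
`B_n(T̄_s) ≅ T`. -/
theorem tree_subdivision_bell {V : Type*} [Fintype V] [DecidableEq V]
    (T : SimpleGraph V) [DecidableRel T.Adj] (hT : T.IsTree)
    (n : ℕ) (hn : Fintype.card V = n) (h2 : 2 ≤ n) :
    Nonempty (bellGraph (subdivide T)ᶜ n ≃g T) := by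
  subst hn
  classical
  let f : V → {P : Multiset (Finset (V ⊕ T.edgeSet)) //
      IsStablePartition (subdivide T)ᶜ (Fintype.card V) P} :=
    fun r => ⟨TreeBell.phi hT r, TreeBell.phi_stable hT r⟩
  have hbij : Function.Bijective f := by
    constructor
    · intro a b hab
      exact TreeBell.phi_inj hT (congrArg Subtype.val hab)
    · rintro ⟨P, hP⟩
      obtain ⟨r, rfl⟩ := TreeBell.phi_surj hT hP
      exact ⟨r, rfl⟩
  refine ⟨SimpleGraph.Iso.symm ⟨Equiv.ofBijective f hbij, ?_⟩⟩
  intro a b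
  show (bellGraph (subdivide T)ᶜ (Fintype.card V)).Adj (f a) (f b) ↔ T.Adj a b
  constructor
  · rintro ⟨hne, x, hx⟩
    exact TreeBell.adj_of_phi_adj hT (fun hab => hne (by rw [hab])) hx
  · intro hadj
    refine ⟨fun hh => hadj.ne (TreeBell.phi_inj hT (congrArg Subtype.val hh)), ?_⟩
    exact TreeBell.phi_adj_of_adj hT hadj
end

section
/- Let T be a tree of order n. Then the maximum degree of the Bell 3-coloring graph B_3(T) is at most n. -/
open SimpleGraph

variable {V : Type*} [Fintype V] [DecidableEq V]

set_option linter.unusedSectionVars false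

lemma count_sum_map_erase (M : Multiset (Finset V)) {u v : V} (h : u ≠ v) :
    Multiset.count u (((eraseVtx M v).map Finset.val).sum)
      = Multiset.count u ((M.map Finset.val).sum) := by
  induction M using Multiset.induction with
  | empty => simp [eraseVtx]
  | cons a M ih =>
      simp only [eraseVtx, Multiset.map_cons, Multiset.sum_cons, Multiset.count_add] at *
      rw [ih, Finset.erase_val, Multiset.count_erase_of_ne h]
lemma mem_of_count_sum_pos (M : Multiset (Finset V)) (v : V)
    (h : 0 < Multiset.count v ((M.map Finset.val).sum)) : ∃ t ∈ M, v ∈ t := by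
  induction M using Multiset.induction with
  | empty => simp at h
  | cons a M ih =>
      simp only [Multiset.map_cons, Multiset.sum_cons, Multiset.count_add] at h
      by_cases hv : v ∈ a
      · exact ⟨a, Multiset.mem_cons_self _ _, hv⟩
      · have : Multiset.count v a.val = 0 := by
          simp [Multiset.count_eq_zero, hv]
        rw [this, zero_add] at h
        obtain ⟨t, ht, hvt⟩ := ih h
        exact ⟨t, Multiset.mem_cons_of_mem ht, hvt⟩
lemma reconstruct (Q : Multiset (Finset V))
    (hQ : (Q.map Finset.val).sum = (Finset.univ : Finset V).val) (v : V) :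
    ∃ s ∈ eraseVtx Q v, Q = insert v s ::ₘ (eraseVtx Q v).erase s := by
  have hc : Multiset.count v ((Q.map Finset.val).sum) = 1 := by
    rw [hQ]
    exact Multiset.count_eq_one_of_mem Finset.univ.nodup (Finset.mem_univ v)
  obtain ⟨t, ht, hvt⟩ := mem_of_count_sum_pos Q v (by omega)
  have hQsplit : Q = t ::ₘ Q.erase t := (Multiset.cons_erase ht).symm
  have hrest : ∀ s ∈ Q.erase t, v ∉ s := by
    intro s hs hvs
    have h1 : Multiset.count v t.val = 1 :=
      Multiset.count_eq_one_of_mem t.nodup hvt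
    have h2 : 0 < Multiset.count v (((Q.erase t).map Finset.val).sum) := by
      have : 0 < Multiset.count v ((Multiset.map Finset.val {s}).sum) := by
        simpa [Multiset.count_pos] using hvs
      calc 0 < Multiset.count v s.val := by simpa [Multiset.count_pos] using hvs
        _ ≤ _ := by
          obtain ⟨u, hu⟩ := Multiset.exists_cons_of_mem hs
          rw [hu]; simp
    rw [hQsplit] at hc
    simp only [Multiset.map_cons, Multiset.sum_cons, Multiset.count_add, h1] at hc
    omega
  have heq : eraseVtx (Q.erase t) v = Q.erase t := by
    rw [eraseVtx, Multiset.map_congr rfl (fun s hs => Finset.erase_eq_of_notMem (hrest s hs)),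
      Multiset.map_id']
  have hE : eraseVtx Q v = (t.erase v) ::ₘ Q.erase t := by
    conv_lhs => rw [hQsplit]
    rw [eraseVtx, Multiset.map_cons]
    conv_lhs => rw [show Multiset.map (fun s => s.erase v) (Q.erase t) = eraseVtx (Q.erase t) v from rfl, heq]
  refine ⟨t.erase v, by rw [hE]; exact Multiset.mem_cons_self _ _, ?_⟩
  rw [hE, Multiset.erase_cons_head, Finset.insert_erase hvt]
  exact hQsplit
lemma key_unique (T : SimpleGraph V) (hT : T.IsTree) (v : V)
    {P Q1 Q2 : Multiset (Finset V)} (hP : IsStablePartition T 3 P)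
    (h1 : IsStablePartition T 3 Q1) (h2 : IsStablePartition T 3 Q2)
    (e1 : eraseVtx Q1 v = eraseVtx P v) (e2 : eraseVtx Q2 v = eraseVtx P v)
    (n1 : Q1 ≠ P) (n2 : Q2 ≠ P) : Q1 = Q2 := by
  set R := eraseVtx P v with hR
  obtain ⟨s0, hs0R, hP0⟩ := reconstruct P hP.2.1 v
  obtain ⟨s1, hs1R, hQ1⟩ := reconstruct Q1 h1.2.1 v
  obtain ⟨s2, hs2R, hQ2⟩ := reconstruct Q2 h2.2.1 v
  rw [e1] at hs1R hQ1
  rw [e2] at hs2R hQ2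
  -- reduce to s1 = s2
  suffices hs : s1 = s2 by rw [hQ1, hQ2, hs]
  have hne1 : s1 ≠ s0 := fun h => n1 (by rw [hQ1, h, ← hP0])
  have hne2 : s2 ≠ s0 := fun h => n2 (by rw [hQ2, h, ← hP0])
  by_cases hw : ∃ w, T.Adj v w
  · obtain ⟨w, hw⟩ := hw
    have hwv : w ≠ v := fun h => T.loopless.irrefl v (h ▸ hw)
    -- w not in s0, s1, s2
    have hws0 : w ∉ s0 := by
      intro hws
      exact hP.2.2 (insert v s0) (hP0 ▸ Multiset.mem_cons_self _ _) v
        (Finset.mem_insert_self _ _) w (Finset.mem_insert_of_mem hws) hw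
    have hws1 : w ∉ s1 := by
      intro hws
      exact h1.2.2 (insert v s1) (hQ1 ▸ Multiset.mem_cons_self _ _) v
        (Finset.mem_insert_self _ _) w (Finset.mem_insert_of_mem hws) hw
    have hws2 : w ∉ s2 := by
      intro hws
      exact h2.2.2 (insert v s2) (hQ2 ▸ Multiset.mem_cons_self _ _) v
        (Finset.mem_insert_self _ _) w (Finset.mem_insert_of_mem hws) hw
    -- count of w over R is 1
    have hcR : Multiset.count w ((R.map Finset.val).sum) = 1 := by
      rw [hR, count_sum_map_erase P hwv, hP.2.1]
      exact Multiset.count_eq_one_of_mem Finset.univ.nodup (Finset.mem_univ w)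
    have hsplit0 : R = s0 ::ₘ R.erase s0 := (Multiset.cons_erase hs0R).symm
    have hs1R' : s1 ∈ R.erase s0 := (Multiset.mem_erase_of_ne hne1).mpr hs1R
    have hs2R' : s2 ∈ R.erase s0 := (Multiset.mem_erase_of_ne hne2).mpr hs2R
    by_contra hne
    have hs2R'' : s2 ∈ (R.erase s0).erase s1 :=
      (Multiset.mem_erase_of_ne (Ne.symm hne)).mpr hs2R'
    have hsplit1 : R.erase s0 = s1 ::ₘ (R.erase s0).erase s1 :=
      (Multiset.cons_erase hs1R').symm
    have hcard : Multiset.card ((R.erase s0).erase s1) = 1 := by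
      have hcR3 : Multiset.card R = 3 := by
        rw [hR, eraseVtx, Multiset.card_map, hP.1]
      rw [Multiset.card_erase_of_mem hs1R', Multiset.card_erase_of_mem hs0R, hcR3]
      rfl
    obtain ⟨a, ha⟩ := Multiset.card_eq_one.mp hcard
    have has2 : a = s2 := by
      rw [ha, Multiset.mem_singleton] at hs2R''; exact hs2R''.symm
    rw [hsplit0, hsplit1, ha, has2] at hcR
    simp only [Multiset.map_cons, Multiset.sum_cons, Multiset.count_add,
      Multiset.map_singleton, Multiset.sum_singleton] at hcR
    have c0 : Multiset.count w s0.val = 0 := Multiset.count_eq_zero.mpr hws0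
    have c1 : Multiset.count w s1.val = 0 := Multiset.count_eq_zero.mpr hws1
    have c2 : Multiset.count w s2.val = 0 := Multiset.count_eq_zero.mpr hws2
    omega
  · -- v has no neighbor: V = {v}, so all parts of R are empty
    push_neg at hw
    have hall : ∀ u : V, u = v := by
      intro u
      by_contra hu
      obtain ⟨p⟩ := (hT.isConnected.preconnected v u)
      cases p with
      | nil => exact hu rfl
      | cons h _ => exact hw _ h
    have hempty : ∀ s ∈ R, s = ∅ := by
      intro s hs
      rw [hR, eraseVtx] at hs
      obtain ⟨p, _, rfl⟩ := Multiset.mem_map.mp hs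
      ext u
      simp only [Finset.mem_erase, Finset.notMem_empty, iff_false, not_and]
      intro hu _
      exact hu (hall u)
    rw [hempty s1 hs1R, hempty s2 hs2R]

/-- **Maximum degree bound.** For a tree `T` of order `n`, every vertex of the
Bell `3`-coloring graph `B₃(T)` has (finite) degree at most `n`. -/

theorem bell3_tree_maxDegree_le (T : SimpleGraph V) (hT : T.IsTree)
    (n : ℕ) (hn : Fintype.card V = n)
    (P : {P : Multiset (Finset V) // IsStablePartition T 3 P}) :
    ((bellGraph T 3).neighborSet P).Finite ∧
      ((bellGraph T 3).neighborSet P).ncard ≤ n := by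
  classical
  have hex : ∀ Q : ((bellGraph T 3).neighborSet P),
      ∃ v : V, eraseVtx (Q.1).1 v = eraseVtx P.1 v := by
    intro Q
    obtain ⟨_, v, hv⟩ := Q.2
    exact ⟨v, hv.symm⟩
  choose f hf using hex
  have hinj : Function.Injective f := by
    intro Q1 Q2 h
    have hne1 : (Q1.1).1 ≠ P.1 := fun he => Q1.2.1 (Subtype.ext he.symm)
    have hne2 : (Q2.1).1 ≠ P.1 := fun he => Q2.2.1 (Subtype.ext he.symm)
    have h2' := hf Q2
    rw [← h] at h2'
    exact Subtype.ext (Subtype.ext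
      (key_unique T hT (f Q1) P.2 (Q1.1).2 (Q2.1).2 (hf Q1) h2' hne1 hne2))
  have hfin : Finite ((bellGraph T 3).neighborSet P) := Finite.of_injective f hinj
  refine ⟨Set.finite_coe_iff.mp hfin, ?_⟩
  rw [← Nat.card_coe_set_eq]
  calc Nat.card ((bellGraph T 3).neighborSet P) ≤ Nat.card V :=
        Nat.card_le_card_of_injective f hinj
    _ = n := by rw [Nat.card_eq_fintype_card, hn]
end

section
/- Let T be a tree of order n and let P be a stable 3-partition of T all three of whose parts are nonempty. Then the degree of P in the Bell 3-coloring graph B_3(T) is at most n − 1. -/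
open SimpleGraph

variable {V : Type*} [Fintype V] [DecidableEq V]

section Aux

variable {T : SimpleGraph V}

lemma part_count {P : Multiset (Finset V)} (hP : IsStablePartition T 3 P) (v : V) :
    ((P.map fun s => Multiset.count v s.val)).sum = 1 := by
  have h := congrArg (Multiset.count v) hP.2.1
  rw [Multiset.count_sum] at h
  rw [h]
  exact Multiset.count_eq_one_of_mem Finset.univ.nodup (Finset.mem_univ v)

lemma exists_rep {P : Multiset (Finset V)} (hP : IsStablePartition T 3 P) (v : V) :
    ∃ s ∈ P, v ∈ s ∧ ∀ t ∈ P.erase s, v ∉ t := by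
  have hsum := part_count hP v
  have hex : ∃ s ∈ P, v ∈ s := by
    by_contra hc
    push_neg at hc
    have h0 : ((P.map fun s => Multiset.count v s.val)).sum = 0 := by
      apply Multiset.sum_eq_zero
      intro x hx
      obtain ⟨s, hs, rfl⟩ := Multiset.mem_map.mp hx
      rw [Multiset.count_eq_zero]
      exact hc s hs
    omega
  obtain ⟨s, hs, hv⟩ := hex
  refine ⟨s, hs, hv, ?_⟩
  intro t ht hvt
  have hP' := Multiset.cons_erase hs
  rw [← hP', Multiset.map_cons, Multiset.sum_cons] at hsum
  have h1 : Multiset.count v s.val = 1 := Multiset.count_eq_one_of_mem s.nodup hv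
  have h2 : ((P.erase s).map fun s => Multiset.count v s.val).sum = 0 := by omega
  have h3 := Multiset.sum_eq_zero_iff.mp h2 (Multiset.count v t.val)
    (Multiset.mem_map_of_mem _ ht)
  rw [Multiset.count_eq_zero] at h3
  exact h3 hvt

lemma eraseVtx_eq {P : Multiset (Finset V)} {s : Finset V} {v : V} (hs : s ∈ P)
    (hrest : ∀ t ∈ P.erase s, v ∉ t) :
    eraseVtx P v = (s.erase v) ::ₘ P.erase s := by
  unfold eraseVtx
  conv_lhs => rw [← Multiset.cons_erase hs]
  rw [Multiset.map_cons]
  congr 1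
  have : (P.erase s).map (fun t => t.erase v) = (P.erase s).map id :=
    Multiset.map_congr rfl (fun t ht => Finset.erase_eq_of_notMem (hrest t ht))
  rw [this, Multiset.map_id]

lemma core {P Q : Multiset (Finset V)} (hQ : IsStablePartition T 3 Q)
    {v : V} (hE : eraseVtx Q v = eraseVtx P v) (hne : Q ≠ P)
    {s : Finset V} (hs : s ∈ P) (hv : v ∈ s) (hrest : ∀ t ∈ P.erase s, v ∉ t) :
    ∃ e ∈ P.erase s, (∀ u ∈ e, ¬ T.Adj v u) ∧
      Q = (insert v e) ::ₘ (s.erase v) ::ₘ ((P.erase s).erase e) := by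
  obtain ⟨sQ, hsQ, hvQ, hrestQ⟩ := exists_rep hQ v
  have h1 : (sQ.erase v) ::ₘ Q.erase sQ = (s.erase v) ::ₘ P.erase s := by
    rw [← eraseVtx_eq hsQ hrestQ, ← eraseVtx_eq hs hrest, hE]
  by_cases hcase : sQ.erase v = s.erase v
  · exfalso
    apply hne
    rw [hcase] at h1
    have h2 : Q.erase sQ = P.erase s := by
      have := congrArg (fun M => Multiset.erase M (s.erase v)) h1
      simpa [Multiset.erase_cons_head] using this
    have h3 : sQ = s := by
      rw [← Finset.insert_erase hvQ, ← Finset.insert_erase hv, hcase]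
    rw [← Multiset.cons_erase hsQ, h2, h3, Multiset.cons_erase hs]
  · have hmem : sQ.erase v ∈ P.erase s := by
      have hm : sQ.erase v ∈ (s.erase v) ::ₘ P.erase s := h1 ▸ Multiset.mem_cons_self _ _
      rcases Multiset.mem_cons.mp hm with h | h
      · exact absurd h hcase
      · exact h
    refine ⟨sQ.erase v, hmem, ?_, ?_⟩
    · intro u hu hadj
      exact hQ.2.2 sQ hsQ v hvQ u (Finset.mem_of_mem_erase hu) hadj
    · have h2 : Q.erase sQ = (s.erase v) ::ₘ ((P.erase s).erase (sQ.erase v)) := by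
        have h4 := congrArg (fun M => Multiset.erase M (sQ.erase v)) h1
        simp only [Multiset.erase_cons_head] at h4
        rw [h4]
        exact Multiset.erase_cons_tail _ (Ne.symm hcase)
      conv_lhs => rw [← Multiset.cons_erase hsQ]
      rw [h2, Finset.insert_erase hvQ]

lemma mem_pair {M : Multiset (Finset V)} (hcard : Multiset.card M = 2)
    {a b : Finset V} (ha : a ∈ M) (hb : b ∈ M) (hab : a ≠ b) :
    ∀ c ∈ M, c = a ∨ c = b := by
  have h1 : b ∈ M.erase a := (Multiset.mem_erase_of_ne hab.symm).mpr hb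
  have h2 : Multiset.card (M.erase a) = 1 := by
    rw [Multiset.card_erase_of_mem ha, hcard]
    rfl
  obtain ⟨x, hx⟩ := Multiset.card_eq_one.mp h2
  rw [hx, Multiset.mem_singleton] at h1
  intro c hc
  rw [← Multiset.cons_erase ha, hx, ← h1] at hc
  rcases Multiset.mem_cons.mp hc with h | h
  · exact Or.inl h
  · exact Or.inr (Multiset.mem_singleton.mp h)

lemma part_unique_s16 {P : Multiset (Finset V)} (hP : IsStablePartition T 3 P)
    {x : V} {t t' : Finset V} (ht : t ∈ P) (hx : x ∈ t) (ht' : t' ∈ P) (hx' : x ∈ t') :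
    t = t' := by
  obtain ⟨s, hs, hxs, hrest⟩ := exists_rep hP x
  have h1 : t = s := by
    by_contra h
    exact hrest t ((Multiset.mem_erase_of_ne h).mpr ht) hx
  have h2 : t' = s := by
    by_contra h
    exact hrest t' ((Multiset.mem_erase_of_ne h).mpr ht') hx'
  rw [h1, h2]

lemma uniq {P : Multiset (Finset V)} (hP : IsStablePartition T 3 P)
    {v : V} (hnbr : ∃ u, T.Adj v u)
    {Q Q' : Multiset (Finset V)} (hQ : IsStablePartition T 3 Q)
    (hQ' : IsStablePartition T 3 Q')
    (hE : eraseVtx Q v = eraseVtx P v) (hE' : eraseVtx Q' v = eraseVtx P v)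
    (hne : Q ≠ P) (hne' : Q' ≠ P) : Q = Q' := by
  obtain ⟨s, hs, hv, hrest⟩ := exists_rep hP v
  obtain ⟨e, he, hefree, hQeq⟩ := core hQ hE hne hs hv hrest
  obtain ⟨e', he', hefree', hQeq'⟩ := core hQ' hE' hne' hs hv hrest
  have hee : e = e' := by
    by_contra hee
    obtain ⟨u, hu⟩ := hnbr
    obtain ⟨t, ht, hut, -⟩ := exists_rep hP u
    have hts : t ≠ s := by
      intro h
      exact hP.2.2 s hs v hv u (by rw [← h]; exact hut) hu
    have htmem : t ∈ P.erase s := (Multiset.mem_erase_of_ne hts).mpr ht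
    have hcard2 : Multiset.card (P.erase s) = 2 := by
      rw [Multiset.card_erase_of_mem hs, hP.1]
      rfl
    rcases mem_pair hcard2 he he' hee t htmem with h | h
    · exact hefree u (by rw [← h]; exact hut) hu
    · exact hefree' u (by rw [← h]; exact hut) hu
  rw [hQeq, hQeq', hee]

lemma no_move {P : Multiset (Finset V)} (hP : IsStablePartition T 3 P)
    {v u1 u2 : V} (h1 : T.Adj v u1) (h2 : T.Adj v u2)
    {t1 t2 : Finset V} (ht1 : t1 ∈ P) (ht2 : t2 ∈ P)
    (hu1 : u1 ∈ t1) (hu2 : u2 ∈ t2) (htne : t1 ≠ t2)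
    {Q : Multiset (Finset V)} (hQ : IsStablePartition T 3 Q)
    (hE : eraseVtx Q v = eraseVtx P v) : Q = P := by
  by_contra hne
  obtain ⟨s, hs, hv, hrest⟩ := exists_rep hP v
  obtain ⟨e, he, hefree, -⟩ := core hQ hE hne hs hv hrest
  have hts1 : t1 ≠ s := by
    intro h
    exact hP.2.2 s hs v hv u1 (by rw [← h]; exact hu1) h1
  have hts2 : t2 ≠ s := by
    intro h
    exact hP.2.2 s hs v hv u2 (by rw [← h]; exact hu2) h2
  have htmem1 : t1 ∈ P.erase s := (Multiset.mem_erase_of_ne hts1).mpr ht1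
  have htmem2 : t2 ∈ P.erase s := (Multiset.mem_erase_of_ne hts2).mpr ht2
  have hcard2 : Multiset.card (P.erase s) = 2 := by
    rw [Multiset.card_erase_of_mem hs, hP.1]
    rfl
  rcases mem_pair hcard2 htmem1 htmem2 htne e he with h | h
  · exact hefree u1 (by rw [h]; exact hu1) h1
  · exact hefree u2 (by rw [h]; exact hu2) h2

lemma parts_nodup {P : Multiset (Finset V)} (hP : IsStablePartition T 3 P)
    (hparts : ∀ s ∈ P, s ≠ (∅ : Finset V)) : P.Nodup := by
  rw [Multiset.nodup_iff_count_le_one]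
  intro s
  by_contra h
  push_neg at h
  have hs : s ∈ P := by
    rw [← Multiset.count_pos]; omega
  have hs2 : s ∈ P.erase s := by
    rw [← Multiset.count_pos, Multiset.count_erase_self]; omega
  obtain ⟨x, hx⟩ := Finset.nonempty_iff_ne_empty.mpr (hparts s hs)
  obtain ⟨s0, hs0, hxs0, hrest⟩ := exists_rep hP x
  have heq : s = s0 := part_unique_s16 hP hs hx hs0 hxs0
  rw [heq] at hs2
  exact hrest s0 hs2 hxs0

lemma has_nbr (hconn : T.Connected) {P : Multiset (Finset V)}
    (hP : IsStablePartition T 3 P) (hparts : ∀ s ∈ P, s ≠ (∅ : Finset V)) (v : V) :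
    ∃ u, T.Adj v u := by
  obtain ⟨s, hs, hv, hrest⟩ := exists_rep hP v
  have hcard2 : Multiset.card (P.erase s) = 2 := by
    rw [Multiset.card_erase_of_mem hs, hP.1]
    rfl
  have hpos : ∃ t, t ∈ P.erase s := Multiset.card_pos_iff_exists_mem.mp (by omega)
  obtain ⟨t, ht⟩ := hpos
  obtain ⟨u, hu⟩ := Finset.nonempty_iff_ne_empty.mpr
    (hparts t (Multiset.mem_of_mem_erase ht))
  have hvu : v ≠ u := by
    intro h
    exact hrest t ht (by rw [h]; exact hu)
  obtain ⟨p⟩ := hconn.preconnected v u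
  cases p with
  | nil => exact absurd rfl hvu
  | cons h q => exact ⟨_, h⟩

lemma exists_two (hconn : T.Connected) {P : Multiset (Finset V)}
    (hP : IsStablePartition T 3 P) (hparts : ∀ s ∈ P, s ≠ (∅ : Finset V)) :
    ∃ v u1 u2 t1 t2, T.Adj v u1 ∧ T.Adj v u2 ∧ t1 ∈ P ∧ t2 ∈ P ∧
      u1 ∈ t1 ∧ u2 ∈ t2 ∧ t1 ≠ t2 := by
  by_contra hc
  push_neg at hc
  classical
  choose pt hptP hptmem hptrest using exists_rep hP
  have hsame : ∀ v u1 u2, T.Adj v u1 → T.Adj v u2 → pt u1 = pt u2 := by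
    intro v u1 u2 a1 a2
    exact hc v u1 u2 (pt u1) (pt u2) a1 a2 (hptP u1) (hptP u2) (hptmem u1) (hptmem u2)
  haveI : Nonempty V := hconn.nonempty
  obtain ⟨a⟩ := ‹Nonempty V›
  obtain ⟨v1, hav1⟩ := has_nbr hconn hP hparts a
  let Ipred : V → Prop := fun y =>
    (pt y = pt a ∨ pt y = pt v1) ∧ ∀ u, T.Adj y u → (pt u = pt a ∨ pt u = pt v1)
  have step : ∀ x y, T.Adj x y → Ipred x → Ipred y := by
    rintro x y hxy ⟨hx1, hx2⟩
    refine ⟨hx2 y hxy, ?_⟩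
    intro u hyu
    have h := hsame y x u hxy.symm hyu
    rw [← h]
    exact hx1
  have propagate : ∀ {x y : V} (_ : T.Walk x y), Ipred x → Ipred y := by
    intro x y p
    induction p with
    | nil => exact id
    | cons h q ih => exact fun hx => ih (step _ _ h hx)
  have base : Ipred a := by
    refine ⟨Or.inl rfl, ?_⟩
    intro u hu
    exact Or.inr (hsame a v1 u hav1 hu).symm
  have hall : ∀ y, Ipred y := by
    intro y
    obtain ⟨p⟩ := hconn.preconnected a y
    exact propagate p base
  have hnodup := parts_nodup hP hparts
  have hcard3 : P.toFinset.card = 3 := by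
    rw [Multiset.toFinset_card_of_nodup hnodup, hP.1]
  have hsub : P.toFinset ⊆ {pt a, pt v1} := by
    intro c hcP
    have hcmem : c ∈ P := Multiset.mem_toFinset.mp hcP
    obtain ⟨x, hx⟩ := Finset.nonempty_iff_ne_empty.mpr (hparts c hcmem)
    have hpc : pt x = c := part_unique_s16 hP (hptP x) (hptmem x) hcmem hx
    rcases (hall x).1 with h | h
    · rw [hpc] at h
      simp [h]
    · rw [hpc] at h
      simp [h]
  have hle : (3 : ℕ) ≤ 2 := by
    calc (3 : ℕ) = P.toFinset.card := hcard3.symm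
      _ ≤ ({pt a, pt v1} : Finset (Finset V)).card := Finset.card_le_card hsub
      _ ≤ 2 := Finset.card_insert_le _ _ |>.trans (by simp)
  omega

end Aux

/-- **Degree bound for partitions with three nonempty parts.** For a tree `T`
of order `n`, any stable `3`-partition all of whose parts are nonempty has
degree at most `n − 1` in the Bell `3`-coloring graph `B₃(T)`. -/
theorem bell3_tree_degree_nonempty_parts (T : SimpleGraph V) (hT : T.IsTree)
    (n : ℕ) (hn : Fintype.card V = n)
    (P : {P : Multiset (Finset V) // IsStablePartition T 3 P})
    (hparts : ∀ s ∈ P.1, s ≠ (∅ : Finset V)) :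
    ((bellGraph T 3).neighborSet P).Finite ∧
      ((bellGraph T 3).neighborSet P).ncard ≤ n - 1 := by
  classical
  subst hn
  have hconn := hT.isConnected
  have hP := P.2
  haveI : Nonempty V := hconn.nonempty
  set N := (bellGraph T 3).neighborSet P with hN
  have hadj : ∀ Q ∈ N, P ≠ Q ∧ ∃ v, eraseVtx P.1 v = eraseVtx Q.1 v := fun Q hQ => hQ
  set f : {Q : Multiset (Finset V) // IsStablePartition T 3 Q} → V :=
    fun Q => if h : ∃ v, eraseVtx P.1 v = eraseVtx Q.1 v then h.choose
      else Classical.arbitrary V with hfdef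
  have hf : ∀ Q ∈ N, eraseVtx P.1 (f Q) = eraseVtx Q.1 (f Q) := by
    intro Q hQ
    obtain ⟨-, hex⟩ := hadj Q hQ
    simp only [hfdef, dif_pos hex]
    exact hex.choose_spec
  have hfne : ∀ Q ∈ N, Q.1 ≠ P.1 := by
    intro Q hQ h
    exact (hadj Q hQ).1 (Subtype.ext h.symm)
  have hinj : Set.InjOn f N := by
    intro Q hQ Q' hQ' heq
    apply Subtype.ext
    exact uniq hP (has_nbr hconn hP hparts (f Q)) Q.2 Q'.2
      (hf Q hQ).symm (by rw [heq]; exact (hf Q' hQ').symm) (hfne Q hQ) (hfne Q' hQ')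
  obtain ⟨w, u1, u2, t1, t2, hw1, hw2, ht1, ht2, hu1, hu2, htne⟩ :=
    exists_two hconn hP hparts
  have hfw : ∀ Q ∈ N, f Q ≠ w := by
    intro Q hQ h
    apply hfne Q hQ
    have hE := hf Q hQ
    rw [h] at hE
    exact no_move hP hw1 hw2 ht1 ht2 hu1 hu2 htne Q.2 hE.symm
  have hsub : f '' N ⊆ ↑(Finset.univ.erase w) := by
    rintro x ⟨Q, hQ, rfl⟩
    exact Finset.mem_coe.mpr (Finset.mem_erase.mpr ⟨hfw Q hQ, Finset.mem_univ _⟩)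
  have hfin : N.Finite := Set.Finite.of_finite_image (Set.toFinite _) hinj
  refine ⟨hfin, ?_⟩
  calc N.ncard = (f '' N).ncard := (Set.ncard_image_of_injOn hinj).symm
    _ ≤ (↑(Finset.univ.erase w) : Set V).ncard :=
        Set.ncard_le_ncard hsub (Finset.finite_toSet _)
    _ = (Finset.univ.erase w).card := Set.ncard_coe_finset _
    _ = Fintype.card V - 1 := by
        rw [Finset.card_erase_of_mem (Finset.mem_univ _), Finset.card_univ]
end
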